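/- arXiv:2501.19398 — 3 statements merged into one kernel-verified Lean document; each statement's English description precedes it below -/
import Mathlib

section
/- Suppose the secret word w* is uniform on a set W of K words, and conditioned on w* = w, the vector of N−1 responses r consists of i.i.d. draws from a distribution D^w on a finite set R, where KL(D^{w_i} || D^{w_j}) ≤ α for all pairs w_i, w_j ∈ W. Then for every (possibly randomized) estimator A mapping R^{N−1} to W, the probability that A(r) = w* is at most 1/K + ((K−1)/K)·sqrt((N−1)α). -/
open Finset Real

def IsPMF {R : Type*} [Fintype R] (D : R → ℝ) : Prop :=
  (∀ r, 0 ≤ D r) ∧ ∑ r, D r = 1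

noncomputable def KLdiv {R : Type*} [Fintype R] (D1 D2 : R → ℝ) : ℝ :=
  ∑ r, D1 r * Real.log (D1 r / D2 r)

lemma my_sqrt_prod {ι : Type*} (s : Finset ι) (f : ι → ℝ) (hf : ∀ i, 0 ≤ f i) :
    Real.sqrt (∏ i ∈ s, f i) = ∏ i ∈ s, Real.sqrt (f i) := by
  induction s using Finset.cons_induction with
  | empty => simp
  | cons a s ha ih =>
    rw [Finset.prod_cons, Finset.prod_cons, Real.sqrt_mul (hf a), ih]

lemma my_one_sub_pow (n : ℕ) (ρ : ℝ) (h0 : 0 ≤ ρ) (h1 : ρ ≤ 1) :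
    1 - ρ ^ n ≤ n * (1 - ρ) := by
  induction n with
  | zero => simp
  | succ k ih =>
    have hpk : ρ ^ k ≤ 1 := pow_le_one₀ h0 h1
    have hpk0 : 0 ≤ ρ ^ k := pow_nonneg h0 k
    rw [pow_succ]
    push_cast
    nlinarith [ih, mul_nonneg hpk0 h0]

lemma my_affinity_le_one {S : Type*} [Fintype S] (P Q : S → ℝ)
    (hP0 : ∀ s, 0 ≤ P s) (hP1 : ∑ s, P s = 1)
    (hQ0 : ∀ s, 0 ≤ Q s) (hQ1 : ∑ s, Q s = 1) :
    ∑ s, Real.sqrt (P s * Q s) ≤ 1 := by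
  have hsq : ∀ s, Real.sqrt (P s * Q s) = Real.sqrt (P s) * Real.sqrt (Q s) :=
    fun s => Real.sqrt_mul (hP0 s) _
  have hρ0 : (0:ℝ) ≤ ∑ s, Real.sqrt (P s * Q s) :=
    Finset.sum_nonneg fun s _ => Real.sqrt_nonneg _
  have h := Finset.sum_mul_sq_le_sq_mul_sq Finset.univ
    (fun s => Real.sqrt (P s)) (fun s => Real.sqrt (Q s))
  simp only [Real.sq_sqrt (hP0 _), Real.sq_sqrt (hQ0 _)] at h
  have hsq2 : (∑ s, Real.sqrt (P s * Q s)) ^ 2 ≤ 1 := by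
    calc (∑ s, Real.sqrt (P s * Q s)) ^ 2
        = (∑ s, Real.sqrt (P s) * Real.sqrt (Q s)) ^ 2 := by
          congr 1; exact Finset.sum_congr rfl fun s _ => hsq s
      _ ≤ (∑ s, P s) * ∑ s, Q s := h
      _ = 1 := by rw [hP1, hQ1, mul_one]
  nlinarith

lemma my_tv {S : Type*} [Fintype S] (P Q f : S → ℝ)
    (hP0 : ∀ s, 0 ≤ P s) (hP1 : ∑ s, P s = 1)
    (hQ0 : ∀ s, 0 ≤ Q s) (hQ1 : ∑ s, Q s = 1)
    (hf0 : ∀ s, 0 ≤ f s) (hf1 : ∀ s, f s ≤ 1) :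
    ∑ s, (P s - Q s) * f s ≤
      Real.sqrt (2 * (1 - ∑ s, Real.sqrt (P s * Q s))) := by
  set ρ : ℝ := ∑ s, Real.sqrt (P s * Q s) with hρ
  have hsq : ∀ s, Real.sqrt (P s * Q s) = Real.sqrt (P s) * Real.sqrt (Q s) :=
    fun s => Real.sqrt_mul (hP0 s) _
  have hρ0 : 0 ≤ ρ := Finset.sum_nonneg fun s _ => Real.sqrt_nonneg _
  have hρ1 : ρ ≤ 1 := my_affinity_le_one P Q hP0 hP1 hQ0 hQ1
  have step1 : ∑ s, (P s - Q s) * f s ≤ ∑ s, (|P s - Q s| + (P s - Q s)) / 2 := by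
    refine Finset.sum_le_sum fun s _ => ?_
    rcases le_or_gt (Q s) (P s) with h | h
    · rw [abs_of_nonneg (by linarith)]
      have := mul_le_mul_of_nonneg_left (hf1 s) (by linarith : (0:ℝ) ≤ P s - Q s)
      linarith
    · rw [abs_of_neg (by linarith)]
      have := mul_nonneg (by linarith : (0:ℝ) ≤ Q s - P s) (hf0 s)
      nlinarith
  have step2 : ∑ s, (|P s - Q s| + (P s - Q s)) / 2 = (∑ s, |P s - Q s|) / 2 := by
    rw [← Finset.sum_div, Finset.sum_add_distrib]
    simp [Finset.sum_sub_distrib, hP1, hQ1]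
  have habs : ∀ s, |P s - Q s| =
      |Real.sqrt (P s) - Real.sqrt (Q s)| * (Real.sqrt (P s) + Real.sqrt (Q s)) := by
    intro s
    rw [← abs_of_nonneg (by positivity : (0:ℝ) ≤ Real.sqrt (P s) + Real.sqrt (Q s)),
      ← abs_mul]
    congr 1
    nlinarith [Real.sq_sqrt (hP0 s), Real.sq_sqrt (hQ0 s)]
  have hcs := Finset.sum_mul_sq_le_sq_mul_sq Finset.univ
    (fun s => |Real.sqrt (P s) - Real.sqrt (Q s)|) (fun s => Real.sqrt (P s) + Real.sqrt (Q s))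
  have hu : ∑ s, |Real.sqrt (P s) - Real.sqrt (Q s)| ^ 2 = 2 - 2 * ρ := by
    have : ∀ s, |Real.sqrt (P s) - Real.sqrt (Q s)| ^ 2
        = P s + Q s - 2 * (Real.sqrt (P s) * Real.sqrt (Q s)) := by
      intro s
      rw [sq_abs]
      nlinarith [Real.sq_sqrt (hP0 s), Real.sq_sqrt (hQ0 s)]
    simp only [this]
    rw [Finset.sum_sub_distrib, Finset.sum_add_distrib, hP1, hQ1, ← Finset.mul_sum]
    rw [hρ]
    simp only [hsq]
    ring
  have hv : ∑ s, (Real.sqrt (P s) + Real.sqrt (Q s)) ^ 2 = 2 + 2 * ρ := by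
    have : ∀ s, (Real.sqrt (P s) + Real.sqrt (Q s)) ^ 2
        = P s + Q s + 2 * (Real.sqrt (P s) * Real.sqrt (Q s)) := by
      intro s
      nlinarith [Real.sq_sqrt (hP0 s), Real.sq_sqrt (hQ0 s)]
    simp only [this]
    rw [Finset.sum_add_distrib, Finset.sum_add_distrib, hP1, hQ1, ← Finset.mul_sum]
    rw [hρ]
    simp only [hsq]
    ring
  have hL1 : (∑ s, |P s - Q s|) ^ 2 ≤ (2 - 2 * ρ) * (2 + 2 * ρ) := by
    calc (∑ s, |P s - Q s|) ^ 2
        = (∑ s, |Real.sqrt (P s) - Real.sqrt (Q s)| * (Real.sqrt (P s) + Real.sqrt (Q s))) ^ 2 := by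
          congr 1; exact Finset.sum_congr rfl fun s _ => habs s
      _ ≤ (2 - 2 * ρ) * (2 + 2 * ρ) := by rw [← hu, ← hv]; exact hcs
  have hhalf : ((∑ s, |P s - Q s|) / 2) ^ 2 ≤ 2 * (1 - ρ) := by nlinarith
  have hnn : 0 ≤ (∑ s, |P s - Q s|) / 2 := by positivity
  calc ∑ s, (P s - Q s) * f s ≤ (∑ s, |P s - Q s|) / 2 := by rw [← step2]; exact step1
    _ ≤ Real.sqrt (2 * (1 - ρ)) := by
        rw [show (∑ s, |P s - Q s|) / 2 = Real.sqrt (((∑ s, |P s - Q s|) / 2) ^ 2) from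
          (Real.sqrt_sq hnn).symm]
        exact Real.sqrt_le_sqrt hhalf

lemma my_hellinger_le_kl {R : Type*} [Fintype R] (P Q : R → ℝ)
    (hP0 : ∀ r, 0 ≤ P r) (hP1 : ∑ r, P r = 1) (hQ0 : ∀ r, 0 ≤ Q r)
    (hac : ∀ r, P r = 0 ↔ Q r = 0) :
    1 - ∑ r, Real.sqrt (P r * Q r) ≤ (∑ r, P r * Real.log (P r / Q r)) / 2 := by
  have key : ∀ r, 2 * (P r - Real.sqrt (P r * Q r)) ≤ P r * Real.log (P r / Q r) := by
    intro r
    rcases eq_or_lt_of_le (hP0 r) with h | hP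
    · rw [← h]; simp
    · have hQ : 0 < Q r := by
        rcases eq_or_lt_of_le (hQ0 r) with h' | h'
        · exact absurd ((hac r).mpr h'.symm) (ne_of_gt hP)
        · exact h'
      have ht : 0 < Q r / P r := by positivity
      have hlog1 : Real.log (Real.sqrt (Q r / P r)) ≤ Real.sqrt (Q r / P r) - 1 :=
        Real.log_le_sub_one_of_pos (Real.sqrt_pos.mpr ht)
      have hlog2 : Real.log (Q r / P r) = 2 * Real.log (Real.sqrt (Q r / P r)) := by
        rw [Real.log_sqrt ht.le]; ring
      have hlogPQ : Real.log (P r / Q r) = - Real.log (Q r / P r) := by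
        rw [← Real.log_inv, inv_div]
      have hPsq : P r * Real.sqrt (Q r / P r) = Real.sqrt (P r * Q r) := by
        rw [show P r * Q r = (Q r / P r) * (P r * P r) by field_simp,
          Real.sqrt_mul ht.le, Real.sqrt_mul_self (hP0 r)]
        ring
      have heq : P r * Real.log (P r / Q r) = - (P r * Real.log (Q r / P r)) := by
        rw [hlogPQ]; ring
      rw [heq, hlog2]
      have := mul_le_mul_of_nonneg_left hlog1 (hP0 r)
      nlinarith
  have hsum := Finset.sum_le_sum (fun r (_ : r ∈ Finset.univ) => key r)
  have h2 : ∑ i : R, 2 * (P i - Real.sqrt (P i * Q i))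
      = 2 * (1 - ∑ r, Real.sqrt (P r * Q r)) := by
    rw [← Finset.mul_sum, Finset.sum_sub_distrib, hP1]
  rw [h2] at hsum
  linarith

lemma my_prod_affinity {R : Type*} [Fintype R] (n : ℕ) (P Q : R → ℝ)
    (hP0 : ∀ r, 0 ≤ P r) (hQ0 : ∀ r, 0 ≤ Q r) :
    ∑ x : Fin n → R, Real.sqrt ((∏ i, P (x i)) * ∏ i, Q (x i)) =
      (∑ r, Real.sqrt (P r * Q r)) ^ n := by
  rw [Fintype.sum_pow]
  refine Finset.sum_congr rfl fun x _ => ?_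
  rw [← Finset.prod_mul_distrib]
  exact my_sqrt_prod _ _ fun i => mul_nonneg (hP0 _) (hQ0 _)

/-- Proposition 2: if the secret word `w*` is uniform on `W` (of size `K`) and, given
`w* = w`, the `N-1` responses are i.i.d. from `D w`, where the family `{D w}` is
`α`-KL pairwise concealing, then every (randomized) estimator `A : R^{N-1} → W`
guesses `w*` correctly with probability at most `1/K + ((K-1)/K)·√((N-1)α)`. -/
theorem secret_word_concealment {R W : Type*} [Fintype R] [Fintype W] [DecidableEq W]
    (N K : ℕ) (hN : 2 ≤ N) (hK : 1 ≤ K) (hcard : Fintype.card W = K)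
    (α : ℝ) (hα : 0 ≤ α)
    (D : W → R → ℝ) (hpmf : ∀ w, IsPMF (D w))
    (hac : ∀ w w' r, D w r = 0 ↔ D w' r = 0)
    (hKL : ∀ w w', KLdiv (D w) (D w') ≤ α)
    (A : (Fin (N - 1) → R) → W → ℝ) (hA : ∀ x, IsPMF (A x)) :
    (1 / (K : ℝ)) * ∑ w : W, ∑ x : Fin (N - 1) → R, (∏ i, D w (x i)) * A x w ≤
      1 / (K : ℝ) + (((K : ℝ) - 1) / K) * Real.sqrt (((N : ℝ) - 1) * α) := by
  have hNn : ((N : ℝ) - 1) = ((N - 1 : ℕ) : ℝ) := by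
    rw [Nat.cast_sub (by omega : 1 ≤ N), Nat.cast_one]
  have hK0 : (0:ℝ) < K := by exact_mod_cast hK
  set P : W → (Fin (N - 1) → R) → ℝ := fun w x => ∏ i, D w (x i) with hP
  have hP0 : ∀ w x, 0 ≤ P w x := fun w x =>
    Finset.prod_nonneg fun i _ => (hpmf w).1 _
  have hP1 : ∀ w, ∑ x, P w x = 1 := by
    intro w
    rw [hP]
    rw [← Fintype.sum_pow, (hpmf w).2, one_pow]
  have hA1 : ∀ x w, A x w ≤ 1 := by
    intro x w
    calc A x w ≤ ∑ w', A x w' :=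
          Finset.single_le_sum (fun w' _ => (hA x).1 w') (Finset.mem_univ w)
      _ = 1 := (hA x).2
  set β : ℝ := Real.sqrt (((N - 1 : ℕ) : ℝ) * α) with hβ
  -- pairwise bound
  have pair : ∀ w w', ∑ x, (P w x - P w' x) * A x w ≤ β := by
    intro w w'
    have h1 := my_tv (P w) (P w') (fun x => A x w)
      (hP0 w) (hP1 w) (hP0 w') (hP1 w') (fun x => (hA x).1 w) (fun x => hA1 x w)
    have hρ0 : 0 ≤ ∑ r, Real.sqrt (D w r * D w' r) :=
      Finset.sum_nonneg fun r _ => Real.sqrt_nonneg _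
    have hρ1 : ∑ r, Real.sqrt (D w r * D w' r) ≤ 1 :=
      my_affinity_le_one (D w) (D w') (hpmf w).1 (hpmf w).2 (hpmf w').1 (hpmf w').2
    have haff : ∑ x, Real.sqrt (P w x * P w' x)
        = (∑ r, Real.sqrt (D w r * D w' r)) ^ (N - 1) :=
      my_prod_affinity (N - 1) (D w) (D w') (hpmf w).1 (hpmf w').1
    have hkl : 1 - ∑ r, Real.sqrt (D w r * D w' r) ≤ α / 2 := by
      have := my_hellinger_le_kl (D w) (D w') (hpmf w).1 (hpmf w).2 (hpmf w').1
        (fun r => hac w w' r)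
      have h2 := hKL w w'
      rw [KLdiv] at h2
      calc 1 - ∑ r, Real.sqrt (D w r * D w' r)
          ≤ (∑ r, D w r * Real.log (D w r / D w' r)) / 2 := this
        _ ≤ α / 2 := by linarith
    have harg : 2 * (1 - ∑ x, Real.sqrt (P w x * P w' x)) ≤ ((N - 1 : ℕ) : ℝ) * α := by
      rw [haff]
      have := my_one_sub_pow (N - 1) _ hρ0 hρ1
      nlinarith
    calc ∑ x, (P w x - P w' x) * A x w
        ≤ Real.sqrt (2 * (1 - ∑ x, Real.sqrt (P w x * P w' x))) := h1
      _ ≤ β := Real.sqrt_le_sqrt harg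
  have hβ0 : 0 ≤ β := Real.sqrt_nonneg _
  -- main combination
  set L : ℝ := ∑ w, ∑ x, P w x * A x w with hL
  have key : ∀ w, (K : ℝ) * ∑ x, P w x * A x w
      ≤ (∑ w', ∑ x, P w' x * A x w) + ((K : ℝ) - 1) * β := by
    intro w
    have hgsum : ∑ w' : W, (∑ x, P w x * A x w - ∑ x, P w' x * A x w)
        ≤ ((K : ℝ) - 1) * β := by
      rw [← Finset.add_sum_erase _ _ (Finset.mem_univ w)]
      have hdiag : (∑ x, P w x * A x w - ∑ x, P w x * A x w) = 0 := by ring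
      rw [hdiag, zero_add]
      calc ∑ w' ∈ Finset.univ.erase w, (∑ x, P w x * A x w - ∑ x, P w' x * A x w)
          ≤ ∑ w' ∈ Finset.univ.erase w, β := by
            refine Finset.sum_le_sum fun w' _ => ?_
            have := pair w w'
            rw [show ∑ x, (P w x - P w' x) * A x w
              = ∑ x, P w x * A x w - ∑ x, P w' x * A x w by
                rw [← Finset.sum_sub_distrib]; exact Finset.sum_congr rfl fun x _ => by ring]
              at this
            exact this
        _ = ((K : ℝ) - 1) * β := by
            rw [Finset.sum_const, Finset.card_erase_of_mem (Finset.mem_univ w),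
              Finset.card_univ, hcard, nsmul_eq_mul, Nat.cast_sub hK, Nat.cast_one]
    calc (K : ℝ) * ∑ x, P w x * A x w
        = ∑ _w' : W, ∑ x, P w x * A x w := by
          rw [Finset.sum_const, Finset.card_univ, hcard, nsmul_eq_mul]
      _ = ∑ w' : W, (∑ x, P w' x * A x w
            + (∑ x, P w x * A x w - ∑ x, P w' x * A x w)) := by
          exact Finset.sum_congr rfl fun w' _ => by ring
      _ = (∑ w', ∑ x, P w' x * A x w)
            + ∑ w' : W, (∑ x, P w x * A x w - ∑ x, P w' x * A x w) := by
          rw [Finset.sum_add_distrib]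
      _ ≤ (∑ w', ∑ x, P w' x * A x w) + ((K : ℝ) - 1) * β :=
          add_le_add_right hgsum _
  have hT : ∑ w : W, ∑ w' : W, ∑ x, P w' x * A x w = (K : ℝ) := by
    rw [Finset.sum_comm]
    have : ∀ w' : W, ∑ w : W, ∑ x, P w' x * A x w = 1 := by
      intro w'
      rw [Finset.sum_comm]
      calc ∑ x, ∑ w : W, P w' x * A x w = ∑ x, P w' x * ∑ w : W, A x w := by
            exact Finset.sum_congr rfl fun x _ => by rw [Finset.mul_sum]
        _ = ∑ x, P w' x := by
            exact Finset.sum_congr rfl fun x _ => by rw [(hA x).2, mul_one]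
        _ = 1 := hP1 w'
    rw [Finset.sum_congr rfl fun w' _ => this w', Finset.sum_const,
      Finset.card_univ, hcard, nsmul_eq_mul, mul_one]
  have hKL2 : (K : ℝ) * L ≤ (K : ℝ) + (K : ℝ) * (((K : ℝ) - 1) * β) := by
    calc (K : ℝ) * L = ∑ w, (K : ℝ) * ∑ x, P w x * A x w := by
          rw [hL, Finset.mul_sum]
      _ ≤ ∑ w : W, ((∑ w', ∑ x, P w' x * A x w) + ((K : ℝ) - 1) * β) :=
          Finset.sum_le_sum fun w _ => key w
      _ = (∑ w : W, ∑ w' : W, ∑ x, P w' x * A x w) + ∑ _w : W, ((K : ℝ) - 1) * β := by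
          rw [Finset.sum_add_distrib]
      _ = (K : ℝ) + (K : ℝ) * (((K : ℝ) - 1) * β) := by
          rw [hT, Finset.sum_const, Finset.card_univ, hcard, nsmul_eq_mul]
  have hLb : L ≤ 1 + ((K : ℝ) - 1) * β :=
    le_of_mul_le_mul_left (by linarith : (K : ℝ) * L ≤ (K : ℝ) * (1 + ((K : ℝ) - 1) * β)) hK0
  rw [hNn]
  have hfinal : 1 / (K : ℝ) + ((K : ℝ) - 1) / K * β = 1 / K * (1 + ((K : ℝ) - 1) * β) := by
    field_simp
  show (1 / (K : ℝ)) * L ≤ 1 / (K : ℝ) + (((K : ℝ) - 1) / K) * β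
  rw [hfinal]
  exact mul_le_mul_of_nonneg_left hLb (by positivity)
end

section
/- Concentration of the empirical 3-bin distribution: let X_1,...,X_m be i.i.d. samples from a categorical distribution p = (p_1, p_2, p_3) on three categories, and let p̂ be the empirical distribution. Then Pr(‖p − p̂‖_1 ≥ α/2) ≤ 6·exp(−m·φ·α²/16), where θ = max over subsets A of {p_1,p_2,p_3} of min(Σ_{a∈A} a, 1 − Σ_{a∈A} a) and φ = (1/(1−2θ))·log((1−θ)/θ) (with φ = 2 when θ = 1/2). -/
open Finset Real

/-- A probability vector on `Fin 3`. -/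
def IsProbVec (p : Fin 3 → ℝ) : Prop :=
  (∀ i, 0 ≤ p i) ∧ ∑ i, p i = 1

/-- The empirical distribution of `m` samples `x : Fin m → Fin 3`. -/
noncomputable def empDist (m : ℕ) (x : Fin m → Fin 3) (j : Fin 3) : ℝ :=
  ((univ.filter (fun i => x i = j)).card : ℝ) / m

/-- `θ = max_{A ⊆ {p₁,p₂,p₃}} min(Σ_{a∈A} a, 1 - Σ_{a∈A} a)`. -/
noncomputable def thetaOf (p : Fin 3 → ℝ) : ℝ :=
  (univ : Finset (Fin 3)).powerset.sup' ⟨∅, Finset.empty_mem_powerset _⟩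
    (fun A => min (∑ a ∈ A, p a) (1 - ∑ a ∈ A, p a))

/-- `φ(θ) = (1/(1-2θ))·log((1-θ)/θ)` with the convention `φ = 2` at `θ = 1/2`. -/
noncomputable def phiOf (θ : ℝ) : ℝ :=
  if θ = 1 / 2 then 2 else (1 / (1 - 2 * θ)) * Real.log ((1 - θ) / θ)

lemma hasDerivAt_log_one_sub {x : ℝ} (h : x ≠ 1) :
    HasDerivAt (fun y : ℝ => Real.log (1 - y)) (-(1 - x)⁻¹) x := by
  have h1 : HasDerivAt (fun y : ℝ => 1 - y) (-1) x := by
    simpa using (hasDerivAt_id x).const_sub 1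
  have := (Real.hasDerivAt_log (x := 1 - x) (by intro hh; apply h; linarith)).comp x h1
  simpa [Function.comp_def] using this

/-- `M q = log(1-q) - log q`. -/
noncomputable def Mf (q : ℝ) : ℝ := Real.log (1 - q) - Real.log q

lemma hasDerivAt_Mf {x : ℝ} (h0 : x ≠ 0) (h1 : x ≠ 1) :
    HasDerivAt Mf (-(1 - x)⁻¹ - x⁻¹) x :=
  (hasDerivAt_log_one_sub h1).sub (Real.hasDerivAt_log h0)

lemma phi_mul {q : ℝ} (h0 : 0 < q) (h2 : q ≤ 1 / 2) :
    phiOf q * (1 - 2 * q) = Real.log (1 - q) - Real.log q := by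
  rcases eq_or_lt_of_le h2 with h | h
  · rw [phiOf, if_pos h]
    rw [h]; norm_num
  · rw [phiOf, if_neg (by intro hh; rw [hh] at h; norm_num at h)]
    have h12 : (1:ℝ) - 2 * q ≠ 0 := by intro hh; apply (by linarith : q ≠ 1/2); linarith
    rw [Real.log_div (by linarith : 1 - q ≠ 0) (by linarith : q ≠ 0)]
    field_simp

lemma Mf_nonneg {q : ℝ} (h0 : 0 < q) (h2 : q ≤ 1 / 2) : 0 ≤ Mf q := by
  have : Real.log q ≤ Real.log (1 - q) := Real.log_le_log (by linarith) (by linarith)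
  simp only [Mf]; linarith

lemma phi_ge_two {q : ℝ} (h0 : 0 < q) (h2 : q ≤ 1 / 2) : 2 ≤ phiOf q := by
  -- G(x) = log(1-x) - log x - 2*(1-2*x) is antitone on (0, 1/2]
  have key : ∀ x ∈ Set.Ioc (0:ℝ) (1/2), 2 * (1 - 2 * x) ≤ Mf x := by
    have anti : AntitoneOn (fun x => Mf x - 2 * (1 - 2 * x)) (Set.Ioc (0:ℝ) (1/2)) := by
      apply antitoneOn_of_hasDerivWithinAt_nonpos (convex_Ioc _ _)
        (f' := fun x => (-(1 - x)⁻¹ - x⁻¹) + 4)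
      · intro x hx
        have hx0 : 0 < x := hx.1
        have hx1 : x < 1 := lt_of_le_of_lt hx.2 (by norm_num)
        exact ContinuousAt.continuousWithinAt
          (((hasDerivAt_Mf hx0.ne' hx1.ne).sub
            (((hasDerivAt_id x).const_mul 2).const_sub 1 |>.const_mul 2)).continuousAt)
      · intro x hx
        rw [interior_Ioc] at hx
        have hx0 : 0 < x := hx.1
        have hx1 : x < 1 := lt_of_lt_of_le hx.2 (by norm_num)
        have hd := (hasDerivAt_Mf hx0.ne' hx1.ne).sub
          (((hasDerivAt_id x).const_mul 2).const_sub 1 |>.const_mul 2)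
        have : HasDerivAt (fun x => Mf x - 2 * (1 - 2 * x)) ((-(1 - x)⁻¹ - x⁻¹) + 4) x := by
          refine hd.congr_deriv ?_; ring
        exact this.hasDerivWithinAt
      · intro x hx
        rw [interior_Ioc] at hx
        have hx0 : 0 < x := hx.1
        have hx1 : x < 1 := lt_trans hx.2 (by norm_num)
        have h1x : 0 < 1 - x := by linarith
        rw [← sub_nonpos]
        have e1 : (1 - x)⁻¹ = 1 / (1 - x) := (one_div _).symm
        have e2 : x⁻¹ = 1 / x := (one_div _).symm
        rw [e1, e2]
        have hq : 4 * (x * (1 - x)) ≤ 1 := by nlinarith [sq_nonneg (2 * x - 1)]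
        have : (4:ℝ) ≤ 1 / (1 - x) + 1 / x := by
          rw [div_add_div _ _ h1x.ne' hx0.ne', le_div_iff₀ (by positivity)]
          nlinarith
        linarith
    intro x hx
    have h12 : (1/2 : ℝ) ∈ Set.Ioc (0:ℝ) (1/2) := by norm_num
    have hthis := anti hx h12 hx.2
    simp only at hthis
    have hM12 : Mf (1/2) = 0 := by
      show Real.log (1 - 1/2) - Real.log (1/2) = 0
      norm_num
    rw [hM12] at hthis
    nlinarith
  have hM := key q ⟨h0, h2⟩
  have hphi := phi_mul h0 h2
  rcases eq_or_lt_of_le h2 with h | h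
  · rw [phiOf, if_pos h]
  · have h12 : 0 < 1 - 2 * q := by linarith
    rw [← Mf] at hphi
    nlinarith

lemma phi_q_ineq {q : ℝ} (h0 : 0 < q) (h2 : q ≤ 1 / 2) : 2 * phiOf q * (q * (1 - q)) ≤ 1 := by
  -- F(x) = (1-2x) - 2*x*(1-x)*Mf x is antitone on (0,1/2], F(1/2)=0
  have key : ∀ x ∈ Set.Ioc (0:ℝ) (1/2), 2 * (x * (1 - x)) * Mf x ≤ 1 - 2 * x := by
    have anti : AntitoneOn (fun x => (1 - 2*x) - 2 * (x * (1 - x)) * Mf x) (Set.Ioc (0:ℝ) (1/2)) := by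
      apply antitoneOn_of_hasDerivWithinAt_nonpos (convex_Ioc _ _)
        (f' := fun x => -(2 - 4*x) * Mf x)
      · intro x hx
        have hx0 : 0 < x := hx.1
        have hx1 : x < 1 := lt_of_le_of_lt hx.2 (by norm_num)
        have hd : HasDerivAt (fun x : ℝ => (1 - 2*x) - 2 * (x * (1 - x)) * Mf x)
            ((-2) - ((2 - 4*x) * Mf x + 2 * (x * (1-x)) * (-(1 - x)⁻¹ - x⁻¹))) x := by
          have hmul : HasDerivAt (fun x : ℝ => 2 * (x * (1 - x))) (2 - 4*x) x := by
            have : HasDerivAt (fun x : ℝ => 2 * (x * (1 - x))) (2*(1*(1-x) + x*(-1))) x := by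
              exact (((hasDerivAt_id x).mul ((hasDerivAt_id x).const_sub 1)).const_mul 2)
            convert this using 1; ring
          have := hmul.mul (hasDerivAt_Mf hx0.ne' hx1.ne)
          have hlin : HasDerivAt (fun x : ℝ => 1 - 2*x) (-2) x := by
            simpa using ((hasDerivAt_id x).const_mul 2).const_sub 1
          exact hlin.sub this
        exact hd.continuousAt.continuousWithinAt
      · intro x hx
        rw [interior_Ioc] at hx
        have hx0 : 0 < x := hx.1
        have hx1 : x < 1 := lt_trans hx.2 (by norm_num)
        have h1x : 0 < 1 - x := by linarith
        have hd : HasDerivAt (fun x : ℝ => (1 - 2*x) - 2 * (x * (1 - x)) * Mf x)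
            ((-2) - ((2 - 4*x) * Mf x + 2 * (x * (1-x)) * (-(1 - x)⁻¹ - x⁻¹))) x := by
          have hmul : HasDerivAt (fun x : ℝ => 2 * (x * (1 - x))) (2 - 4*x) x := by
            have : HasDerivAt (fun x : ℝ => 2 * (x * (1 - x))) (2*(1*(1-x) + x*(-1))) x := by
              exact (((hasDerivAt_id x).mul ((hasDerivAt_id x).const_sub 1)).const_mul 2)
            convert this using 1; ring
          have := hmul.mul (hasDerivAt_Mf hx0.ne' hx1.ne)
          have hlin : HasDerivAt (fun x : ℝ => 1 - 2*x) (-2) x := by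
            simpa using ((hasDerivAt_id x).const_mul 2).const_sub 1
          exact hlin.sub this
        have heq : (-2:ℝ) - ((2 - 4*x) * Mf x + 2 * (x * (1-x)) * (-(1 - x)⁻¹ - x⁻¹))
            = -(2 - 4*x) * Mf x := by
          have e : 2 * (x * (1-x)) * (-(1 - x)⁻¹ - x⁻¹) = -2 := by
            field_simp; ring
          rw [e]; ring
        rw [heq] at hd
        exact hd.hasDerivWithinAt
      · intro x hx
        rw [interior_Ioc] at hx
        have hM : 0 ≤ Mf x := Mf_nonneg hx.1 hx.2.le
        have : 0 ≤ 2 - 4*x := by nlinarith [hx.2]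
        nlinarith
    intro x hx
    have h12 : (1/2 : ℝ) ∈ Set.Ioc (0:ℝ) (1/2) := by norm_num
    have hthis := anti hx h12 hx.2
    simp only at hthis
    have hM12 : Mf (1/2) = 0 := by
      show Real.log (1 - 1/2) - Real.log (1/2) = 0
      norm_num
    rw [hM12] at hthis
    nlinarith
  have hK := key q ⟨h0, h2⟩
  have hphi := phi_mul h0 h2
  rw [← Mf] at hphi
  rcases eq_or_lt_of_le h2 with h | h
  · rw [phiOf, if_pos h, h]; norm_num
  · have h12 : 0 < 1 - 2 * q := by linarith
    -- phiOf q = Mf q / (1-2q); goal: 2 * (Mf q/(1-2q)) * q(1-q) ≤ 1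
    have hphiq : phiOf q = Mf q / (1 - 2*q) := by
      field_simp at hphi ⊢
      linarith
    rw [hphiq, show 2 * (Mf q / (1 - 2*q)) * (q * (1 - q)) = (2 * (q * (1-q)) * Mf q)/(1-2*q) by ring]
    rw [div_le_one h12]
    linarith

lemma phiOf_pos {q : ℝ} (h0 : 0 < q) (h2 : q ≤ 1 / 2) : 0 < phiOf q :=
  lt_of_lt_of_le (by norm_num) (phi_ge_two h0 h2)

lemma phi_antitone {s t : ℝ} (hs : 0 < s) (hst : s ≤ t) (ht : t ≤ 1 / 2) :
    phiOf t ≤ phiOf s := by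
  rcases eq_or_lt_of_le ht with h | h
  · rw [h, phiOf, if_pos rfl]
    exact phi_ge_two hs (le_trans hst ht)
  · -- t < 1/2 : use antitonicity of Mf x / (1-2x) on Ioc 0 t
    have anti : AntitoneOn (fun x => Mf x / (1 - 2*x)) (Set.Ioc (0:ℝ) t) := by
      apply antitoneOn_of_hasDerivWithinAt_nonpos (convex_Ioc _ _)
        (f' := fun x => ((-(1 - x)⁻¹ - x⁻¹) * (1 - 2*x) + 2 * Mf x) / (1 - 2*x)^2)
      · intro x hx
        have hx0 : 0 < x := hx.1
        have hx2 : x < 1/2 := lt_of_le_of_lt hx.2 h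
        have hd := (hasDerivAt_Mf hx0.ne' (by linarith : x ≠ 1)).div
          (((hasDerivAt_id x).const_mul 2).const_sub 1) (by simp only [id_eq]; intro hh; nlinarith)
        exact hd.continuousAt.continuousWithinAt
      · intro x hx
        rw [interior_Ioc] at hx
        have hx0 : 0 < x := hx.1
        have hx2 : x < 1/2 := lt_of_lt_of_le hx.2 (le_of_lt h)
        have hd := (hasDerivAt_Mf hx0.ne' (by linarith : x ≠ 1)).div
          (((hasDerivAt_id x).const_mul 2).const_sub 1) (by simp only [id_eq]; intro hh; nlinarith)
        have : HasDerivAt (fun x => Mf x / (1 - 2*x))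
            (((-(1 - x)⁻¹ - x⁻¹) * (1 - 2*x) + 2 * Mf x) / (1 - 2*x)^2) x := by
          refine hd.congr_deriv ?_
          have h2x : ((1:ℝ) - 2*x) ≠ 0 := by nlinarith
          simp only [id]
          ring
        exact this.hasDerivWithinAt
      · intro x hx
        rw [interior_Ioc] at hx
        have hx0 : 0 < x := hx.1
        have hx2 : x < 1/2 := lt_of_lt_of_le hx.2 (le_of_lt h)
        have hx1 : x < 1 := by linarith
        have h1x : 0 < 1 - x := by linarith
        have h2x : (0:ℝ) < 1 - 2*x := by linarith
        apply div_nonpos_of_nonpos_of_nonneg _ (by positivity)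
        -- need (-(1-x)⁻¹ - x⁻¹)(1-2x) + 2 Mf x ≤ 0 i.e. 2 Mf x ≤ (1-2x)/(x(1-x))
        have hq := phi_q_ineq hx0 hx2.le
        have hphi := phi_mul hx0 hx2.le
        rw [← Mf] at hphi
        -- 2 * phiOf x * (x*(1-x)) ≤ 1, phiOf x * (1-2x) = Mf x
        have hxx : (0:ℝ) < x * (1-x) := by positivity
        have hMle : 2 * (Mf x) * (x * (1-x)) ≤ 1 - 2*x := by nlinarith [phiOf_pos hx0 hx2.le]
        have hinv : (-(1 - x)⁻¹ - x⁻¹) = -(1/(x*(1-x))) := by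
          field_simp
          ring
        rw [hinv]
        rw [← sub_nonpos]  -- dummy; we'll finish with computation
        have : (1/(x*(1-x))) * (1 - 2*x) ≥ 2 * Mf x := by
          rw [ge_iff_le, ← sub_nonneg]
          have expand : 1/(x*(1-x)) * (1 - 2*x) - 2 * Mf x
              = (1 - 2*x - 2 * Mf x * (x*(1-x))) / (x*(1-x)) := by
            field_simp
          rw [expand]
          apply div_nonneg _ hxx.le
          linarith
        nlinarith
    have hmem_s : s ∈ Set.Ioc (0:ℝ) t := ⟨hs, hst⟩
    have hmem_t : t ∈ Set.Ioc (0:ℝ) t := ⟨lt_of_lt_of_le hs hst, le_refl t⟩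
    have := anti hmem_s hmem_t hst
    simp only at this
    have es : phiOf s = Mf s / (1 - 2*s) := by
      have h2s : (0:ℝ) < 1 - 2*s := by nlinarith
      have := phi_mul hs (by linarith : s ≤ 1/2)
      rw [← Mf] at this
      field_simp
      linarith
    have et : phiOf t = Mf t / (1 - 2*t) := by
      have h2t : (0:ℝ) < 1 - 2*t := by nlinarith
      have := phi_mul (lt_of_lt_of_le hs hst) ht
      rw [← Mf] at this
      field_simp
      linarith
    rw [es, et]
    exact this

lemma phiOf_symm {q : ℝ} (h0 : 0 < q) (h1 : q < 1) : phiOf (1 - q) = phiOf q := by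
  by_cases h : q = 1/2
  · rw [h]; norm_num
  · have h' : (1:ℝ) - q ≠ 1/2 := by intro hh; apply h; linarith
    rw [phiOf, phiOf, if_neg h', if_neg h]
    have e1 : (1:ℝ) - (1 - q) = q := by ring
    rw [e1]
    rw [Real.log_div h0.ne' (by linarith : (1:ℝ) - q ≠ 0),
        Real.log_div (by linarith : (1:ℝ) - q ≠ 0) h0.ne']
    have h2q : (1:ℝ) - 2*q ≠ 0 := by intro hh; apply h; linarith
    have h2q' : (1:ℝ) - 2*(1-q) ≠ 0 := by intro hh; apply h; linarith
    field_simp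
    ring

lemma phi_ge_two' {q : ℝ} (h0 : 0 < q) (h1 : q < 1) : 2 ≤ phiOf q := by
  rcases le_or_gt q (1/2) with h | h
  · exact phi_ge_two h0 h
  · rw [← phiOf_symm h0 h1]
    exact phi_ge_two (by linarith) (by linarith)

section KL

variable {q c : ℝ}

/-- `h(a) = a log a + (1-a) log(1-a) - a log q - (1-a) log(1-q) - c (a-q)²`. -/
noncomputable def klH (q c a : ℝ) : ℝ :=
  a * Real.log a + (1 - a) * Real.log (1 - a) - a * Real.log q - (1 - a) * Real.log (1 - q)
    - c * (a - q)^2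

noncomputable def klG (q c a : ℝ) : ℝ :=
  Real.log a - Real.log (1 - a) - Real.log q + Real.log (1 - q) - 2 * c * (a - q)

lemma klH_hasDerivAt {a : ℝ} (h0 : 0 < a) (h1 : a < 1) :
    HasDerivAt (klH q c) (klG q c a) a := by
  have d1 : HasDerivAt (fun a : ℝ => a * Real.log a) (Real.log a + 1) a :=
    Real.hasDerivAt_mul_log h0.ne'
  have d2 : HasDerivAt (fun a : ℝ => (1 - a) * Real.log (1 - a))
      (-(Real.log (1 - a) + 1)) a := by
    have inner : HasDerivAt (fun a : ℝ => 1 - a) (-1) a := by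
      simpa using (hasDerivAt_id a).const_sub 1
    have := (Real.hasDerivAt_mul_log (by linarith : (1:ℝ) - a ≠ 0)).comp a inner
    simpa [Function.comp_def] using this
  have d3 : HasDerivAt (fun a : ℝ => a * Real.log q) (Real.log q) a := by
    simpa using (hasDerivAt_id a).mul_const (Real.log q)
  have d4 : HasDerivAt (fun a : ℝ => (1 - a) * Real.log (1 - q)) (-Real.log (1 - q)) a := by
    have : HasDerivAt (fun a : ℝ => 1 - a) (-1) a := by
      simpa using (hasDerivAt_id a).const_sub 1
    simpa using this.mul_const (Real.log (1 - q))
  have d5 : HasDerivAt (fun a : ℝ => c * (a - q)^2) (c * (2 * (a - q))) a := by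
    have : HasDerivAt (fun a : ℝ => (a - q)^2) (2 * (a - q)) a := by
      have h := ((hasDerivAt_id' a).sub_const q).pow 2
      simp at h
      exact h
    simpa using this.const_mul c
  have := (((d1.add d2).sub d3).sub d4).sub d5
  refine this.congr_deriv ?_
  simp only [klG]; ring

lemma klG_hasDerivAt {a : ℝ} (h0 : 0 < a) (h1 : a < 1) :
    HasDerivAt (klG q c) (a⁻¹ + (1 - a)⁻¹ - 2 * c) a := by
  have d1 : HasDerivAt (fun a : ℝ => Real.log a) a⁻¹ a := Real.hasDerivAt_log h0.ne'
  have d2 : HasDerivAt (fun a : ℝ => Real.log (1 - a)) (-(1 - a)⁻¹) a :=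
    hasDerivAt_log_one_sub h1.ne
  have d3 : HasDerivAt (fun a : ℝ => 2 * c * (a - q)) (2 * c) a := by
    simpa using ((hasDerivAt_id a).sub_const q).const_mul (2 * c)
  have := ((d1.sub d2).sub_const (Real.log q)).add_const (Real.log (1 - q)) |>.sub d3
  refine this.congr_deriv ?_
  ring

lemma klH_continuous : Continuous (klH q c) := by
  have c1 : Continuous fun a : ℝ => a * Real.log a := Real.continuous_mul_log
  have c2 : Continuous fun a : ℝ => (1 - a) * Real.log (1 - a) :=
    Real.continuous_mul_log.comp (continuous_const.sub continuous_id)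
  apply Continuous.sub
  apply Continuous.sub
  apply Continuous.sub
  · exact c1.add c2
  · exact (continuous_id.mul continuous_const)
  · exact ((continuous_const.sub continuous_id).mul continuous_const)
  · exact continuous_const.mul ((continuous_id.sub continuous_const).pow 2)

set_option maxHeartbeats 1600000 in
lemma kl_ge_quad {q a : ℝ} (hq0 : 0 < q) (hq2 : q ≤ 1/2) (ha0 : 0 ≤ a) (ha1 : a ≤ 1) :
    phiOf q * (a - q)^2 ≤ a * Real.log a + (1 - a) * Real.log (1 - a)
      - a * Real.log q - (1 - a) * Real.log (1 - q) := by
  obtain ⟨c, hc⟩ : ∃ c, c = phiOf q := ⟨_, rfl⟩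
  rw [← hc]
  have hq1 : q < 1 := by linarith
  have hc2 : 2 ≤ c := hc ▸ phi_ge_two hq0 hq2
  have hkey : c * (1 - 2*q) = Real.log (1 - q) - Real.log q := hc ▸ phi_mul hq0 hq2
  have hrr : 2 * c * (q * (1 - q)) ≤ 1 := hc ▸ phi_q_ineq hq0 hq2
  -- values at q and 1-q
  have hHq : klH q c q = 0 := by simp only [klH]; ring
  have hH1q : klH q c (1 - q) = 0 := by
    simp only [klH]
    have e : (1:ℝ) - (1 - q) = q := by ring
    rw [e]
    nlinarith [hkey]
  have hGq : klG q c q = 0 := by simp only [klG]; ring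
  have hG1q : klG q c (1 - q) = 0 := by
    simp only [klG]
    have e : (1:ℝ) - (1 - q) = q := by ring
    rw [e]
    nlinarith [hkey]
  -- breakpoints
  obtain ⟨d, hd⟩ : ∃ d : ℝ, d = Real.sqrt (1/4 - 1/(2*c)) := ⟨_, rfl⟩
  have hc0 : (0:ℝ) < c := by linarith
  have hdsq : d^2 = 1/4 - 1/(2*c) := by
    rw [hd, Real.sq_sqrt]
    have : 1/(2*c) ≤ 1/4 := by
      rw [div_le_div_iff₀ (by linarith) (by norm_num)]
      linarith
    linarith
  have hd0 : 0 ≤ d := hd ▸ Real.sqrt_nonneg _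
  have hdlt : d < 1/2 := by
    nlinarith [hdsq, hd0, sq_nonneg (d - 1/2), (by positivity : (0:ℝ) < 1/(2*c))]
  obtain ⟨r₁, hr1⟩ : ∃ r : ℝ, r = 1/2 - d := ⟨_, rfl⟩
  obtain ⟨r₂, hr2⟩ : ∃ r : ℝ, r = 1/2 + d := ⟨_, rfl⟩
  have hr1pos : 0 < r₁ := by rw [hr1]; linarith
  have hr2lt : r₂ < 1 := by rw [hr2]; linarith
  have hrprod : r₁ * (1 - r₁) = 1/(2*c) := by rw [hr1]; nlinarith [hdsq]
  have hqr1 : q ≤ r₁ := by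
    by_contra hcon
    push_neg at hcon
    have h1 : q * (1 - q) ≤ 1/(2*c) := by
      rw [le_div_iff₀ (by linarith : (0:ℝ) < 2*c)]
      nlinarith
    have h1' : q * (1 - q) ≤ r₁ * (1 - r₁) := by rw [hrprod]; exact h1
    have e : q*(1-q) - r₁*(1-r₁) = (q - r₁)*(1 - q - r₁) := by ring
    have hprod_le : (q - r₁)*(1 - q - r₁) ≤ 0 := by rw [← e]; linarith
    have h3 : 1 - q - r₁ ≤ 0 := by
      by_contra hpos
      push_neg at hpos
      nlinarith
    rw [hr1] at h3 hcon
    linarith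
  have hr2q : r₂ ≤ 1 - q := by rw [hr2]; rw [hr1] at hqr1; linarith
  -- derivative sign facts for klG
  have derivG_nonneg_lo : ∀ x, 0 < x → x ≤ r₁ → 0 ≤ x⁻¹ + (1 - x)⁻¹ - 2 * c := by
    intro x hx0 hxr
    have hx1 : x < 1 := by rw [hr1] at hxr; linarith
    have h1x : 0 < 1 - x := by linarith
    have hxx : x * (1 - x) ≤ 1/(2*c) := by
      rw [← hrprod]
      rw [hr1] at hxr
      nlinarith
    have : 2 * c ≤ 1 / (x * (1 - x)) := by
      rw [le_div_iff₀ (by positivity)]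
      calc 2 * c * (x * (1-x)) ≤ 2 * c * (1/(2*c)) := by
            apply mul_le_mul_of_nonneg_left hxx (by linarith)
        _ = 1 := by field_simp
    have e : x⁻¹ + (1 - x)⁻¹ = 1 / (x * (1 - x)) := by field_simp; ring
    linarith [e ▸ this]
  have derivG_nonneg_hi : ∀ x, r₂ ≤ x → x < 1 → 0 ≤ x⁻¹ + (1 - x)⁻¹ - 2 * c := by
    intro x hxr hx1
    have hx0 : 0 < x := by rw [hr2] at hxr; linarith
    have h1x : 0 < 1 - x := by linarith
    have hxx : x * (1 - x) ≤ 1/(2*c) := by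
      rw [← hrprod, hr1]
      rw [hr2] at hxr
      nlinarith
    have : 2 * c ≤ 1 / (x * (1 - x)) := by
      rw [le_div_iff₀ (by positivity)]
      calc 2 * c * (x * (1-x)) ≤ 2 * c * (1/(2*c)) := by
            apply mul_le_mul_of_nonneg_left hxx (by linarith)
        _ = 1 := by field_simp
    have e : x⁻¹ + (1 - x)⁻¹ = 1 / (x * (1 - x)) := by field_simp; ring
    linarith [e ▸ this]
  have derivG_nonpos_mid : ∀ x, r₁ ≤ x → x ≤ r₂ → x⁻¹ + (1 - x)⁻¹ - 2 * c ≤ 0 := by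
    intro x hx1 hx2
    have hx0 : 0 < x := lt_of_lt_of_le hr1pos hx1
    have hxlt : x < 1 := lt_of_le_of_lt hx2 hr2lt
    have h1x : 0 < 1 - x := by linarith
    have hxx : 1/(2*c) ≤ x * (1 - x) := by
      rw [← hrprod, hr1]
      rw [hr1] at hx1; rw [hr2] at hx2
      nlinarith
    have : 1 / (x * (1 - x)) ≤ 2 * c := by
      rw [div_le_iff₀ (by positivity)]
      calc (1:ℝ) = 2 * c * (1/(2*c)) := by field_simp
        _ ≤ 2 * c * (x * (1-x)) := by
            apply mul_le_mul_of_nonneg_left hxx (by linarith)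
    have e : x⁻¹ + (1 - x)⁻¹ = 1 / (x * (1 - x)) := by field_simp; ring
    linarith [e ▸ this]
  -- monotonicity of klG on the three ranges
  have contG : ∀ x ∈ Set.Ioo (0:ℝ) 1, ContinuousAt (klG q c) x := fun x hx =>
    (klG_hasDerivAt hx.1 hx.2).continuousAt
  have gmono_lo : MonotoneOn (klG q c) (Set.Ioc 0 r₁) := by
    apply monotoneOn_of_hasDerivWithinAt_nonneg (convex_Ioc _ _)
      (f' := fun x => x⁻¹ + (1 - x)⁻¹ - 2 * c)
    · intro x hx
      exact (contG x ⟨hx.1, by nlinarith [hx.2]⟩).continuousWithinAt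
    · intro x hx
      rw [interior_Ioc] at hx
      exact (klG_hasDerivAt hx.1 (by nlinarith [hx.2])).hasDerivWithinAt
    · intro x hx
      rw [interior_Ioc] at hx
      exact derivG_nonneg_lo x hx.1 hx.2.le
  have ganti_mid : AntitoneOn (klG q c) (Set.Icc r₁ r₂) := by
    apply antitoneOn_of_hasDerivWithinAt_nonpos (convex_Icc _ _)
      (f' := fun x => x⁻¹ + (1 - x)⁻¹ - 2 * c)
    · intro x hx
      exact (contG x ⟨lt_of_lt_of_le hr1pos hx.1, lt_of_le_of_lt hx.2 hr2lt⟩).continuousWithinAt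
    · intro x hx
      rw [interior_Icc] at hx
      exact (klG_hasDerivAt (lt_trans hr1pos hx.1) (lt_trans hx.2 hr2lt)).hasDerivWithinAt
    · intro x hx
      rw [interior_Icc] at hx
      exact derivG_nonpos_mid x hx.1.le hx.2.le
  have gmono_hi : MonotoneOn (klG q c) (Set.Ico r₂ 1) := by
    apply monotoneOn_of_hasDerivWithinAt_nonneg (convex_Ico _ _)
      (f' := fun x => x⁻¹ + (1 - x)⁻¹ - 2 * c)
    · intro x hx
      exact (contG x ⟨lt_of_lt_of_le (by rw [hr2]; linarith) hx.1, hx.2⟩).continuousWithinAt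
    · intro x hx
      rw [interior_Ico] at hx
      exact (klG_hasDerivAt (lt_of_lt_of_le (by rw [hr2]; linarith) hx.1.le) hx.2).hasDerivWithinAt
    · intro x hx
      rw [interior_Ico] at hx
      exact derivG_nonneg_hi x hx.1.le hx.2
  -- sign of klG on boundary regions
  have hq_mem : q ∈ Set.Ioc (0:ℝ) r₁ := ⟨hq0, hqr1⟩
  have h1q_mem : (1 - q) ∈ Set.Ico r₂ 1 := ⟨hr2q, by linarith⟩
  have signG_left : ∀ x, 0 < x → x ≤ q → klG q c x ≤ 0 := by
    intro x hx0 hxq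
    have := gmono_lo ⟨hx0, le_trans hxq hqr1⟩ hq_mem hxq
    rw [hGq] at this; exact this
  have signG_right : ∀ x, 1 - q ≤ x → x < 1 → 0 ≤ klG q c x := by
    intro x hx hx1
    have := gmono_hi h1q_mem ⟨le_trans hr2q hx, hx1⟩ hx
    rw [hG1q] at this; exact this
  -- h is antitone on [0,q] and monotone on [1-q,1]
  have hH_anti_left : AntitoneOn (klH q c) (Set.Icc 0 q) := by
    apply antitoneOn_of_hasDerivWithinAt_nonpos (convex_Icc _ _)
      (f' := klG q c)
      (klH_continuous.continuousOn)
    · intro x hx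
      rw [interior_Icc] at hx
      exact (klH_hasDerivAt hx.1 (by linarith [hx.2] : x < 1)).hasDerivWithinAt
    · intro x hx
      rw [interior_Icc] at hx
      exact signG_left x hx.1 hx.2.le
  have hH_mono_right : MonotoneOn (klH q c) (Set.Icc (1-q) 1) := by
    apply monotoneOn_of_hasDerivWithinAt_nonneg (convex_Icc _ _)
      (f' := klG q c)
      (klH_continuous.continuousOn)
    · intro x hx
      rw [interior_Icc] at hx
      exact (klH_hasDerivAt (by linarith [hx.1] : 0 < x) hx.2).hasDerivWithinAt
    · intro x hx
      rw [interior_Icc] at hx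
      exact signG_right x hx.1.le hx.2
  -- main claim: klH q c a ≥ 0
  have main : 0 ≤ klH q c a := by
    rcases le_or_gt a q with haq | haq
    · have := hH_anti_left ⟨ha0, haq⟩ ⟨hq0.le, le_refl q⟩ haq
      rw [hHq] at this; exact this
    rcases le_or_gt (1-q) a with h1qa | h1qa
    · have := hH_mono_right ⟨le_refl (1-q), by linarith⟩ ⟨h1qa, ha1⟩ h1qa
      rw [hH1q] at this; exact this
    -- middle: q < a < 1-q
    have case1 : (0 ≤ klG q c a ∧ a ≤ r₂) → 0 ≤ klH q c a := by
      rintro ⟨hga, har2⟩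
      -- klG ≥ 0 on (q, a), so klH monotone on [q,a]
      have hmono : MonotoneOn (klH q c) (Set.Icc q a) := by
        apply monotoneOn_of_hasDerivWithinAt_nonneg (convex_Icc _ _)
          (f' := klG q c) (klH_continuous.continuousOn)
        · intro x hx
          rw [interior_Icc] at hx
          exact (klH_hasDerivAt (lt_trans hq0 hx.1) (by nlinarith [hx.2])).hasDerivWithinAt
        · intro x hx
          rw [interior_Icc] at hx
          rcases le_or_gt x r₁ with hxr | hxr
          · have h2 := gmono_lo hq_mem ⟨lt_trans hq0 hx.1, hxr⟩ hx.1.le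
            rw [hGq] at h2; exact h2
          · -- r₁ < x < a ≤ r₂ : antitone gives klG x ≥ klG a ≥ 0
            have h2 := ganti_mid ⟨hxr.le, le_trans hx.2.le har2⟩
              ⟨le_trans hxr.le hx.2.le, har2⟩ hx.2.le
            linarith
      have := hmono ⟨le_refl q, haq.le⟩ ⟨haq.le, le_refl a⟩ haq.le
      rw [hHq] at this; exact this
    have case2 : (klG q c a ≤ 0 ∧ r₁ ≤ a) → 0 ≤ klH q c a := by
      rintro ⟨hga, har1⟩
      have hanti : AntitoneOn (klH q c) (Set.Icc a (1-q)) := by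
        apply antitoneOn_of_hasDerivWithinAt_nonpos (convex_Icc _ _)
          (f' := klG q c) (klH_continuous.continuousOn)
        · intro x hx
          rw [interior_Icc] at hx
          exact (klH_hasDerivAt (by nlinarith [hx.1] : 0 < x) (by nlinarith [hx.2] : x < 1)).hasDerivWithinAt
        · intro x hx
          rw [interior_Icc] at hx
          rcases le_or_gt r₂ x with hxr | hxr
          · have h2 := gmono_hi ⟨hxr, by nlinarith [hx.2]⟩ h1q_mem hx.2.le
            rw [hG1q] at h2; exact h2
          · have h2 := ganti_mid ⟨har1, le_trans hx.1.le hxr.le⟩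
              ⟨le_trans har1 hx.1.le, hxr.le⟩ hx.1.le
            linarith
      have := hanti ⟨le_refl a, h1qa.le⟩ ⟨h1qa.le, le_refl (1-q)⟩ h1qa.le
      rw [hH1q] at this; exact this
    rcases le_or_gt a r₁ with h1 | h1
    · apply case1
      constructor
      · have h2 := gmono_lo hq_mem ⟨lt_trans hq0 haq, h1⟩ haq.le
        rw [hGq] at h2; exact h2
      · rw [hr1, hr2] at *; linarith
    rcases le_or_gt r₂ a with h2 | h2
    · apply case2
      constructor
      · have h3 := gmono_hi ⟨h2, by linarith⟩ h1q_mem h1qa.le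
        rw [hG1q] at h3; exact h3
      · rw [hr1, hr2] at *; linarith
    rcases le_or_gt 0 (klG q c a) with h3 | h3
    · exact case1 ⟨h3, h2.le⟩
    · exact case2 ⟨h3.le, h1.le⟩
  simp only [klH] at main
  linarith

lemma kl_ge_quad' {q a : ℝ} (hq0 : 0 < q) (hq1 : q < 1) (ha0 : 0 ≤ a) (ha1 : a ≤ 1) :
    phiOf q * (a - q)^2 ≤ a * Real.log a + (1 - a) * Real.log (1 - a)
      - a * Real.log q - (1 - a) * Real.log (1 - q) := by
  rcases le_or_gt q (1/2) with h | h
  · exact kl_ge_quad hq0 h ha0 ha1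
  · have := kl_ge_quad (q := 1 - q) (a := 1 - a) (by linarith) (by linarith)
      (by linarith) (by linarith)
    rw [phiOf_symm hq0 hq1] at this
    have e1 : (1:ℝ) - (1 - a) = a := by ring
    have e2 : (1:ℝ) - (1 - q) = q := by ring
    rw [e1, e2] at this
    have e3 : (1 - a - (1 - q))^2 = (a - q)^2 := by ring
    rw [e3] at this
    linarith

end KL


lemma emp_sum_eq {m : ℕ} (x : Fin m → Fin 3) (B : Finset (Fin 3)) :
    ∑ j ∈ B, empDist m x j = (∑ i, if x i ∈ B then (1:ℝ) else 0) / m := by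
  unfold empDist
  rw [← Finset.sum_div]
  congr 1
  have e1 : ∀ j : Fin 3, ((univ.filter (fun i => x i = j)).card : ℝ)
      = ∑ i, if x i = j then (1:ℝ) else 0 := by
    intro j
    rw [Finset.card_filter]
    push_cast
    rfl
  simp_rw [e1]
  rw [Finset.sum_comm]
  congr 1
  ext i
  rw [Finset.sum_ite_eq]

lemma prob_total {m : ℕ} {p : Fin 3 → ℝ} (hp : IsProbVec p) :
    ∑ x : Fin m → Fin 3, ∏ i, p (x i) = 1 := by
  rw [← Fintype.sum_pow, hp.2, one_pow]

set_option maxHeartbeats 1600000 in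
lemma chernoff_B {m : ℕ} (hm : 0 < m) {p : Fin 3 → ℝ} (hp : IsProbVec p) (B : Finset (Fin 3))
    {ε c : ℝ} (hε : 0 < ε)
    (hc : 0 < ∑ j ∈ B, p j → ∑ j ∈ B, p j < 1 → c ≤ phiOf (∑ j ∈ B, p j)) :
    ∑ x : Fin m → Fin 3, (∏ i, p (x i)) *
      (if ε ≤ (∑ j ∈ B, p j) - ∑ j ∈ B, empDist m x j then (1:ℝ) else 0)
      ≤ Real.exp (-(m:ℝ) * c * ε^2) := by
  have hexp_pos : (0:ℝ) < Real.exp (-(m:ℝ) * c * ε^2) := Real.exp_pos _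
  obtain ⟨q, hq⟩ : ∃ q, q = ∑ j ∈ B, p j := ⟨_, rfl⟩
  rw [← hq]
  have hq0 : 0 ≤ q := hq ▸ Finset.sum_nonneg fun j _ => hp.1 j
  have hq1 : q ≤ 1 := by
    rw [hq, ← hp.2]
    exact Finset.sum_le_sum_of_subset_of_nonneg (Finset.subset_univ B) fun i _ _ => hp.1 i
  have hemp_nonneg : ∀ x : Fin m → Fin 3, 0 ≤ ∑ j ∈ B, empDist m x j := by
    intro x
    apply Finset.sum_nonneg
    intro j _
    exact div_nonneg (Nat.cast_nonneg _) (Nat.cast_nonneg _)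
  have hprod_nonneg : ∀ x : Fin m → Fin 3, 0 ≤ ∏ i, p (x i) :=
    fun x => Finset.prod_nonneg fun i _ => hp.1 _
  -- trivial case q = 0
  rcases eq_or_lt_of_le hq0 with hq0' | hq0'
  · have : ∀ x : Fin m → Fin 3, (∏ i, p (x i)) *
        (if ε ≤ q - ∑ j ∈ B, empDist m x j then (1:ℝ) else 0) = 0 := by
      intro x
      rw [if_neg, mul_zero]
      push_neg
      have := hemp_nonneg x
      rw [← hq0'] at *
      linarith
    rw [Finset.sum_congr rfl fun x _ => this x, Finset.sum_const, smul_zero]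
    exact hexp_pos.le
  -- trivial case q = 1
  rcases eq_or_lt_of_le hq1 with hq1' | hq1'
  · have : ∀ x : Fin m → Fin 3, (∏ i, p (x i)) *
        (if ε ≤ q - ∑ j ∈ B, empDist m x j then (1:ℝ) else 0) = 0 := by
      intro x
      rcases eq_or_lt_of_le (hprod_nonneg x) with h0 | h0
      · rw [← h0, zero_mul]
      · -- all p (x i) > 0, hence x i ∈ B for all i
        have hBc : ∀ j, j ∉ B → p j = 0 := by
          intro j hj
          have hsplit := Finset.sum_filter_add_sum_filter_not univ (· ∈ B) p
          rw [Finset.filter_univ_mem] at hsplit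
          have h2 : ∑ j ∈ univ.filter (fun j => ¬ j ∈ B), p j = 0 := by
            rw [hp.2, ← hq] at hsplit; linarith [hq1']
          have := (Finset.sum_eq_zero_iff_of_nonneg
            (fun i _ => hp.1 i)).mp h2 j (by simp [hj])
          exact this
        have hxin : ∀ i, x i ∈ B := by
          intro i
          by_contra hni
          have hz : p (x i) = 0 := hBc _ hni
          have : (∏ i, p (x i)) = 0 := Finset.prod_eq_zero (Finset.mem_univ i) hz
          rw [this] at h0; exact lt_irrefl _ h0
        have hones : ∑ j ∈ B, empDist m x j = 1 := by
          rw [emp_sum_eq]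
          have : ∀ i : Fin m, (if x i ∈ B then (1:ℝ) else 0) = 1 := fun i => if_pos (hxin i)
          rw [Finset.sum_congr rfl fun i _ => this i, Finset.sum_const]
          simp [Finset.card_univ]
          omega
        rw [hones, if_neg, mul_zero]
        push_neg
        linarith [hq1']
    rw [Finset.sum_congr rfl fun x _ => this x, Finset.sum_const, smul_zero]
    exact hexp_pos.le
  -- now 0 < q < 1
  have hcq := hc (hq ▸ hq0') (hq ▸ hq1')
  rw [← hq] at hcq
  have hphi2 : 2 ≤ phiOf q := phi_ge_two' hq0' hq1'
  obtain ⟨a, ha⟩ : ∃ a, a = q - ε := ⟨_, rfl⟩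
  -- case a < 0 : event empty
  rcases lt_or_ge a 0 with haneg | ha0
  · have : ∀ x : Fin m → Fin 3, (∏ i, p (x i)) *
        (if ε ≤ q - ∑ j ∈ B, empDist m x j then (1:ℝ) else 0) = 0 := by
      intro x
      rw [if_neg, mul_zero]
      push_neg
      have := hemp_nonneg x
      rw [ha] at haneg
      linarith
    rw [Finset.sum_congr rfl fun x _ => this x, Finset.sum_const, smul_zero]
    exact hexp_pos.le
  -- key per-sample kl bound
  have hkl := kl_ge_quad' hq0' hq1' (a := a) ha0 (by rw [ha]; linarith)
  have hεa : ε^2 = (a - q)^2 := by rw [ha]; ring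
  -- case a = 0
  rcases eq_or_lt_of_le ha0 with ha0' | ha0'
  · -- event forces all samples outside B
    have hpoint : ∀ x : Fin m → Fin 3, (∏ i, p (x i)) *
        (if ε ≤ q - ∑ j ∈ B, empDist m x j then (1:ℝ) else 0)
        ≤ ∏ i, (p (x i) * (if x i ∈ B then (0:ℝ) else 1)) := by
      intro x
      by_cases hev : ε ≤ q - ∑ j ∈ B, empDist m x j
      · rw [if_pos hev, mul_one]
        have hzero : ∑ j ∈ B, empDist m x j = 0 := by
          have h1 : ∑ j ∈ B, empDist m x j ≤ 0 := by rw [ha] at ha0'; linarith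
          linarith [hemp_nonneg x]
        have hne : ∀ i, x i ∉ B := by
          intro i hin
          rw [emp_sum_eq] at hzero
          have hsum0 : (∑ i, if x i ∈ B then (1:ℝ) else 0) = 0 := by
            rcases div_eq_zero_iff.mp hzero with h | h
            · exact h
            · exact absurd h (by positivity : (0:ℝ) < (m:ℝ)).ne'
          have := (Finset.sum_eq_zero_iff_of_nonneg
            (fun i _ => by positivity)).mp hsum0 i (Finset.mem_univ i)
          rw [if_pos hin] at this
          norm_num at this
        have : ∀ i : Fin m, p (x i) * (if x i ∈ B then (0:ℝ) else 1) = p (x i) := by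
          intro i; rw [if_neg (hne i), mul_one]
        rw [Finset.prod_congr rfl fun i _ => this i]
      · rw [if_neg hev, mul_zero]
        apply Finset.prod_nonneg
        intro i _
        by_cases h : x i ∈ B
        · rw [if_pos h, mul_zero]
        · rw [if_neg h, mul_one]; exact hp.1 _
    calc ∑ x : Fin m → Fin 3, (∏ i, p (x i)) *
          (if ε ≤ q - ∑ j ∈ B, empDist m x j then (1:ℝ) else 0)
        ≤ ∑ x : Fin m → Fin 3, ∏ i, (p (x i) * (if x i ∈ B then (0:ℝ) else 1)) :=
          Finset.sum_le_sum fun x _ => hpoint x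
      _ = (∑ j, p j * (if j ∈ B then (0:ℝ) else 1)) ^ m := (Fintype.sum_pow (fun j => p j * (if j ∈ B then (0:ℝ) else 1)) m).symm
      _ = (1 - q) ^ m := by
          congr 1
          have hsplit := Finset.sum_filter_add_sum_filter_not univ (· ∈ B)
            (fun j => p j * (if j ∈ B then (0:ℝ) else 1))
          have hB : ∑ j ∈ univ.filter (· ∈ B), p j * (if j ∈ B then (0:ℝ) else 1) = 0 := by
            apply Finset.sum_eq_zero
            intro j hj
            rw [Finset.mem_filter] at hj
            rw [if_pos hj.2, mul_zero]
          have hnB : ∑ j ∈ univ.filter (fun j => ¬ j ∈ B), p j * (if j ∈ B then (0:ℝ) else 1)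
              = 1 - q := by
            have e : ∀ j ∈ univ.filter (fun j => ¬ j ∈ B),
                p j * (if j ∈ B then (0:ℝ) else 1) = p j := by
              intro j hj
              rw [Finset.mem_filter] at hj
              rw [if_neg hj.2, mul_one]
            rw [Finset.sum_congr rfl e]
            have hsplit2 := Finset.sum_filter_add_sum_filter_not univ (· ∈ B) p
            rw [Finset.filter_univ_mem] at hsplit2
            rw [hp.2, ← hq] at hsplit2
            linarith
          rw [← hsplit, hB, hnB, zero_add]
      _ ≤ Real.exp (-(m:ℝ) * c * ε^2) := by
          have hper : 1 - q ≤ Real.exp (-(phiOf q * ε^2)) := by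
            have ha' : a = 0 := ha0'.symm
            rw [ha'] at hkl
            norm_num [Real.log_one] at hkl
            rw [← Real.exp_log (by linarith : (0:ℝ) < 1 - q)]
            apply Real.exp_le_exp.mpr
            rw [hεa, ha']
            nlinarith [hkl]
          calc (1 - q)^m ≤ (Real.exp (-(phiOf q * ε^2)))^m :=
                pow_le_pow_left₀ (by linarith) hper m
            _ = Real.exp ((m:ℝ) * -(phiOf q * ε^2)) := by rw [← Real.exp_nat_mul]
            _ ≤ Real.exp (-(m:ℝ) * c * ε^2) := by
                apply Real.exp_le_exp.mpr
                have hε2 : (0:ℝ) ≤ ε^2 := sq_nonneg ε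
                have hm0 : (0:ℝ) ≤ (m:ℝ) := Nat.cast_nonneg m
                nlinarith [mul_le_mul_of_nonneg_left
                  (mul_le_mul_of_nonneg_right hcq hε2) hm0]
  -- main case 0 < a < q
  · have haq : a < q := by rw [ha]; linarith
    have ha1 : a < 1 := by linarith
    obtain ⟨lam, hlam⟩ : ∃ l, l = Real.log ((1-a) * q) - Real.log (a * (1-q)) := ⟨_, rfl⟩
    have hlam0 : 0 ≤ lam := by
      rw [hlam, sub_nonneg]
      apply Real.log_le_log (by nlinarith : (0:ℝ) < a * (1-q))
      nlinarith
    have hexp_neg_lam : Real.exp (-lam) = a * (1-q) / ((1-a) * q) := by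
      rw [hlam, neg_sub, Real.exp_sub,
        Real.exp_log (by nlinarith : (0:ℝ) < a * (1-q)),
        Real.exp_log (by nlinarith : (0:ℝ) < (1-a) * q)]
    -- pointwise bound
    have hpoint : ∀ x : Fin m → Fin 3, (∏ i, p (x i)) *
        (if ε ≤ q - ∑ j ∈ B, empDist m x j then (1:ℝ) else 0)
        ≤ Real.exp (lam * ((m:ℝ) * a)) *
          ∏ i, (p (x i) * Real.exp (-(lam * (if x i ∈ B then (1:ℝ) else 0)))) := by
      intro x
      have hrewrite : ∏ i, (p (x i) * Real.exp (-(lam * (if x i ∈ B then (1:ℝ) else 0))))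
          = (∏ i, p (x i)) *
            Real.exp (-(lam * ∑ i, (if x i ∈ B then (1:ℝ) else 0))) := by
        rw [Finset.prod_mul_distrib]
        congr 1
        rw [← Real.exp_sum]
        congr 1
        rw [Finset.mul_sum, ← Finset.sum_neg_distrib]
      rw [hrewrite, mul_comm (Real.exp _), mul_assoc, ← Real.exp_add]
      apply mul_le_mul_of_nonneg_left _ (hprod_nonneg x)
      by_cases hev : ε ≤ q - ∑ j ∈ B, empDist m x j
      · rw [if_pos hev]
        apply Real.one_le_exp
        have hemp := emp_sum_eq x B
        have hSle : (∑ i, if x i ∈ B then (1:ℝ) else 0) ≤ (m:ℝ) * a := by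
          have h1 : ∑ j ∈ B, empDist m x j ≤ a := by rw [ha]; linarith
          rw [hemp] at h1
          rw [div_le_iff₀ (by positivity : (0:ℝ) < (m:ℝ))] at h1
          linarith [h1]
        nlinarith [hSle, hlam0]
      · rw [if_neg hev]
        positivity
    calc ∑ x : Fin m → Fin 3, (∏ i, p (x i)) *
          (if ε ≤ q - ∑ j ∈ B, empDist m x j then (1:ℝ) else 0)
        ≤ ∑ x : Fin m → Fin 3, Real.exp (lam * ((m:ℝ) * a)) *
            ∏ i, (p (x i) * Real.exp (-(lam * (if x i ∈ B then (1:ℝ) else 0)))) :=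
          Finset.sum_le_sum fun x _ => hpoint x
      _ = Real.exp (lam * ((m:ℝ) * a)) *
            (∑ j, p j * Real.exp (-(lam * (if j ∈ B then (1:ℝ) else 0)))) ^ m := by
          rw [← Finset.mul_sum]
          congr 1
          exact (Fintype.sum_pow
            (fun j => p j * Real.exp (-(lam * (if j ∈ B then (1:ℝ) else 0)))) m).symm
      _ = Real.exp (lam * ((m:ℝ) * a)) * ((1-q)/(1-a)) ^ m := by
          congr 2
          have hsplit := Finset.sum_filter_add_sum_filter_not univ (· ∈ B)
            (fun j => p j * Real.exp (-(lam * (if j ∈ B then (1:ℝ) else 0))))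
          have hB : ∑ j ∈ univ.filter (· ∈ B),
              p j * Real.exp (-(lam * (if j ∈ B then (1:ℝ) else 0)))
              = q * Real.exp (-lam) := by
            have e : ∀ j ∈ univ.filter (· ∈ B),
                p j * Real.exp (-(lam * (if j ∈ B then (1:ℝ) else 0)))
                = p j * Real.exp (-lam) := by
              intro j hj
              rw [Finset.mem_filter] at hj
              rw [if_pos hj.2, mul_one]
            rw [Finset.sum_congr rfl e, ← Finset.sum_mul, Finset.filter_univ_mem, ← hq]
          have hnB : ∑ j ∈ univ.filter (fun j => ¬ j ∈ B),
              p j * Real.exp (-(lam * (if j ∈ B then (1:ℝ) else 0))) = 1 - q := by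
            have e : ∀ j ∈ univ.filter (fun j => ¬ j ∈ B),
                p j * Real.exp (-(lam * (if j ∈ B then (1:ℝ) else 0))) = p j := by
              intro j hj
              rw [Finset.mem_filter] at hj
              rw [if_neg hj.2, mul_zero, neg_zero, Real.exp_zero, mul_one]
            rw [Finset.sum_congr rfl e]
            have hsplit2 := Finset.sum_filter_add_sum_filter_not univ (· ∈ B) p
            rw [Finset.filter_univ_mem] at hsplit2
            rw [hp.2, ← hq] at hsplit2
            linarith
          rw [← hsplit, hB, hnB, hexp_neg_lam]
          have h1a : ((1:ℝ)-a) ≠ 0 := by linarith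
          have h1q : ((1:ℝ)-q) ≠ 0 := by linarith
          have hqne : q ≠ 0 := ne_of_gt hq0'
          field_simp
          ring
      _ = (Real.exp (lam * a) * ((1-q)/(1-a))) ^ m := by
          rw [mul_pow, ← Real.exp_nat_mul]
          congr 2
          ring
      _ ≤ (Real.exp (-(phiOf q * ε^2))) ^ m := by
          apply pow_le_pow_left₀ _ _ m
          · exact mul_nonneg (Real.exp_nonneg _)
              (le_of_lt (div_pos (by linarith) (by linarith)))
          have h1a : (0:ℝ) < 1 - a := by linarith
          have h1q : (0:ℝ) < 1 - q := by linarith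
          rw [show Real.exp (lam * a) * ((1-q)/(1-a))
              = Real.exp (lam * a + (Real.log (1-q) - Real.log (1-a))) by
            rw [Real.exp_add, Real.exp_sub, Real.exp_log h1q, Real.exp_log h1a]]
          apply Real.exp_le_exp.mpr
          have hlam_expand : lam = Real.log (1-a) + Real.log q - Real.log a - Real.log (1-q) := by
            rw [hlam, Real.log_mul (by linarith : (1:ℝ)-a ≠ 0) (by linarith : q ≠ 0),
              Real.log_mul (by linarith : a ≠ 0) (by linarith : (1:ℝ)-q ≠ 0)]
            ring
          rw [hlam_expand, hεa]
          nlinarith [hkl]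
      _ = Real.exp ((m:ℝ) * -(phiOf q * ε^2)) := by rw [← Real.exp_nat_mul]
      _ ≤ Real.exp (-(m:ℝ) * c * ε^2) := by
          apply Real.exp_le_exp.mpr
          have hε2 : (0:ℝ) ≤ ε^2 := sq_nonneg ε
          have hm0 : (0:ℝ) ≤ (m:ℝ) := Nat.cast_nonneg m
          nlinarith [mul_le_mul_of_nonneg_left
            (mul_le_mul_of_nonneg_right hcq hε2) hm0]

lemma theta_le_half {p : Fin 3 → ℝ} : thetaOf p ≤ 1/2 := by
  apply Finset.sup'_le
  intro A _
  rcases le_total (∑ a ∈ A, p a) (1 - ∑ a ∈ A, p a) with h | h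
  · rw [min_eq_left h]; linarith
  · rw [min_eq_right h]; linarith

lemma min_le_theta {p : Fin 3 → ℝ} (B : Finset (Fin 3)) :
    min (∑ j ∈ B, p j) (1 - ∑ j ∈ B, p j) ≤ thetaOf p := by
  unfold thetaOf
  exact Finset.le_sup' (fun A => min (∑ a ∈ A, p a) (1 - ∑ a ∈ A, p a))
    (Finset.mem_powerset.mpr (Finset.subset_univ B))

lemma phi_theta_le {p : Fin 3 → ℝ} {B : Finset (Fin 3)}
    (h0 : 0 < ∑ j ∈ B, p j) (h1 : ∑ j ∈ B, p j < 1) :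
    phiOf (thetaOf p) ≤ phiOf (∑ j ∈ B, p j) := by
  obtain ⟨q, hq⟩ : ∃ q, q = ∑ j ∈ B, p j := ⟨_, rfl⟩
  rw [← hq] at h0 h1 ⊢
  have hmin := min_le_theta (p := p) B
  rw [← hq] at hmin
  rcases le_total q (1 - q) with h | h
  · rw [min_eq_left h] at hmin
    exact phi_antitone h0 hmin theta_le_half
  · rw [min_eq_right h] at hmin
    rw [← phiOf_symm h0 h1]
    exact phi_antitone (by linarith) hmin theta_le_half

/-- Weissman et al. L1 deviation inequality for `m` i.i.d. samples from a categorical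
distribution on three categories:
`Pr(‖p - p̂‖₁ ≥ α/2) ≤ 6·exp(-m·φ·α²/16)`. -/
theorem weissman_l1_concentration (m : ℕ) (p : Fin 3 → ℝ) (hp : IsProbVec p)
    (α : ℝ) (hα : 0 < α) :
    (∑ x : Fin m → Fin 3, (∏ i, p (x i)) *
        (if α / 2 ≤ ∑ j, |p j - empDist m x j| then 1 else 0)) ≤
      6 * Real.exp (-(m : ℝ) * phiOf (thetaOf p) * α ^ 2 / 16) := by
  have hprod_nonneg : ∀ x : Fin m → Fin 3, 0 ≤ ∏ i, p (x i) :=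
    fun x => Finset.prod_nonneg fun i _ => hp.1 _
  rcases Nat.eq_zero_or_pos m with hm | hm
  · -- m = 0 : LHS ≤ 1 ≤ 6
    have h1 : (∑ x : Fin m → Fin 3, (∏ i, p (x i)) *
        (if α / 2 ≤ ∑ j, |p j - empDist m x j| then 1 else 0)) ≤ 1 := by
      have h2 : (∑ x : Fin m → Fin 3, (∏ i, p (x i)) *
          (if α / 2 ≤ ∑ j, |p j - empDist m x j| then 1 else 0))
          ≤ ∑ x : Fin m → Fin 3, ∏ i, p (x i) := by
        apply Finset.sum_le_sum
        intro x _
        rcases le_or_gt (α/2) (∑ j, |p j - empDist m x j|) with h | h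
        · rw [if_pos h, mul_one]
        · rw [if_neg (not_le.mpr h), mul_zero]; exact hprod_nonneg x
      rw [prob_total hp] at h2
      exact h2
    subst hm
    have : (-(0:ℕ) : ℝ) * phiOf (thetaOf p) * α ^ 2 / 16 = 0 := by norm_num
    rw [this, Real.exp_zero]
    linarith
  -- m ≥ 1
  obtain ⟨S6, hS6⟩ : ∃ S : Finset (Finset (Fin 3)),
      S = (univ : Finset (Fin 3)).powerset.filter (fun B => B ≠ ∅ ∧ B ≠ univ) := ⟨_, rfl⟩
  have hcard : S6.card = 6 := by rw [hS6]; decide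
  have hemp_total : ∀ x : Fin m → Fin 3, ∑ j, empDist m x j = 1 := by
    intro x
    rw [emp_sum_eq x univ]
    have : ∀ i : Fin m, (if x i ∈ (univ : Finset (Fin 3)) then (1:ℝ) else 0) = 1 :=
      fun i => if_pos (Finset.mem_univ _)
    rw [Finset.sum_congr rfl fun i _ => this i, Finset.sum_const, Finset.card_univ]
    simp
    omega
  have hunion : ∀ x : Fin m → Fin 3,
      (if α / 2 ≤ ∑ j, |p j - empDist m x j| then (1:ℝ) else 0) ≤
      ∑ B ∈ S6, (if α/4 ≤ (∑ j ∈ B, p j) - ∑ j ∈ B, empDist m x j then (1:ℝ) else 0) := by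
    intro x
    have hterm_nonneg : ∀ B ∈ S6,
        (0:ℝ) ≤ (if α/4 ≤ (∑ j ∈ B, p j) - ∑ j ∈ B, empDist m x j then (1:ℝ) else 0) := by
      intro B _
      split <;> norm_num
    by_cases hE : α / 2 ≤ ∑ j, |p j - empDist m x j|
    · rw [if_pos hE]
      obtain ⟨B₀, hB₀⟩ : ∃ B : Finset (Fin 3),
          B = univ.filter (fun j => empDist m x j < p j) := ⟨_, rfl⟩
      have habs : ∑ j, |p j - empDist m x j|
          = 2 * ∑ j ∈ B₀, (p j - empDist m x j) := by
        have hsplit := Finset.sum_filter_add_sum_filter_not univ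
          (fun j => empDist m x j < p j) (fun j => |p j - empDist m x j|)
        have e1 : ∑ j ∈ univ.filter (fun j => empDist m x j < p j), |p j - empDist m x j|
            = ∑ j ∈ B₀, (p j - empDist m x j) := by
          rw [hB₀]
          apply Finset.sum_congr rfl
          intro j hj
          rw [Finset.mem_filter] at hj
          exact abs_of_pos (by linarith [hj.2])
        have e2 : ∑ j ∈ univ.filter (fun j => ¬ empDist m x j < p j), |p j - empDist m x j|
            = - ∑ j ∈ univ.filter (fun j => ¬ empDist m x j < p j), (p j - empDist m x j) := by
          rw [← Finset.sum_neg_distrib]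
          apply Finset.sum_congr rfl
          intro j hj
          rw [Finset.mem_filter] at hj
          rw [abs_of_nonpos (by push_neg at hj; linarith [hj.2])]
        have hsplit2 := Finset.sum_filter_add_sum_filter_not univ
          (fun j => empDist m x j < p j) (fun j => p j - empDist m x j)
        have htot : ∑ j, (p j - empDist m x j) = 0 := by
          rw [Finset.sum_sub_distrib, hp.2, hemp_total x]
          ring
        rw [htot] at hsplit2
        rw [← hsplit, e1, e2, ← hB₀] at *
        rw [hB₀] at hsplit2 ⊢
        linarith [hsplit2]
      have hdev : α/4 ≤ ∑ j ∈ B₀, (p j - empDist m x j) := by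
        rw [habs] at hE; linarith
      have hmem : B₀ ∈ S6 := by
        rw [hS6, Finset.mem_filter]
        refine ⟨Finset.mem_powerset.mpr (by rw [hB₀]; exact Finset.filter_subset _ _), ?_, ?_⟩
        · intro hempty
          rw [hempty] at hdev
          rw [Finset.sum_empty] at hdev
          linarith
        · intro huniv
          rw [huniv] at hdev
          have htot : ∑ j, (p j - empDist m x j) = 0 := by
            rw [Finset.sum_sub_distrib, hp.2, hemp_total x]
            ring
          rw [htot] at hdev
          linarith
      have hval : (if α/4 ≤ (∑ j ∈ B₀, p j) - ∑ j ∈ B₀, empDist m x j then (1:ℝ) else 0)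
          = 1 := by
        rw [if_pos]
        rw [← Finset.sum_sub_distrib]
        exact hdev
      calc (1:ℝ) = (if α/4 ≤ (∑ j ∈ B₀, p j) - ∑ j ∈ B₀, empDist m x j then (1:ℝ) else 0) :=
            hval.symm
        _ ≤ _ := Finset.single_le_sum hterm_nonneg hmem
    · rw [if_neg hE]
      exact Finset.sum_nonneg hterm_nonneg
  calc (∑ x : Fin m → Fin 3, (∏ i, p (x i)) *
        (if α / 2 ≤ ∑ j, |p j - empDist m x j| then 1 else 0))
      ≤ ∑ x : Fin m → Fin 3, (∏ i, p (x i)) *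
        (∑ B ∈ S6, (if α/4 ≤ (∑ j ∈ B, p j) - ∑ j ∈ B, empDist m x j then (1:ℝ) else 0)) :=
        Finset.sum_le_sum fun x _ => mul_le_mul_of_nonneg_left (hunion x) (hprod_nonneg x)
    _ = ∑ B ∈ S6, ∑ x : Fin m → Fin 3, (∏ i, p (x i)) *
        (if α/4 ≤ (∑ j ∈ B, p j) - ∑ j ∈ B, empDist m x j then (1:ℝ) else 0) := by
        simp_rw [Finset.mul_sum]
        rw [Finset.sum_comm]
    _ ≤ ∑ B ∈ S6, Real.exp (-(m:ℝ) * phiOf (thetaOf p) * (α/4)^2) := by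
        apply Finset.sum_le_sum
        intro B _
        exact chernoff_B hm hp B (by linarith) (fun h0 h1 => phi_theta_le h0 h1)
    _ = 6 * Real.exp (-(m : ℝ) * phiOf (thetaOf p) * α ^ 2 / 16) := by
        rw [Finset.sum_const, hcard]
        have : -(m:ℝ) * phiOf (thetaOf p) * (α/4)^2
            = -(m : ℝ) * phiOf (thetaOf p) * α ^ 2 / 16 := by ring
        rw [this]
        simp [nsmul_eq_mul]
end

section
/- Achievability bound for the ambiguity-preserving strategy: in the Chameleon game with N ≥ 3 players and K = l(N+1) words (l ≥ 2 an integer), under the non-chameleon strategy π^amb (each non-chameleon eliminates a uniformly random l-subset not containing the secret word, keeping the secret word live and the posterior uniform; players vote for the first player whose response is inconsistent, else player 1), for every chameleon strategy the non-chameleons win with probability at least ((log(N+1) + 0.4)/N)·((l−1)/l). -/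
open Finset

/-! Formalization of Proposition 4 (achievability bound for the ambiguity-preserving
non-chameleon strategy `π^amb`) in the Chameleon game with `N` players and
`K = l(N+1)` words. Responses are subsets of the word set; a history is the vector of
the `N` responses. Non-chameleons play `π^amb`: at turn `i` (0-indexed), if the previous
response `r_{i-1}` contains the secret word and has the right size `l(N+1-i)`, they
respond with a uniformly random subset of it of size `l(N-i)` containing the secret word;
otherwise they respond `null` (the empty set). Everyone votes for the first player whose
response has the wrong size or eliminates the secret word, else for player 1. -/

/-- The set of words, `K = l(N+1)`. -/
abbrev Word (N l : ℕ) := Fin (l * (N + 1))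

/-- The response preceding turn `i`: the full word set for `i = 0`, else player `i-1`'s
response. -/
def prevSet (N l : ℕ) (h : Fin N → Finset (Word N l)) (i : Fin N) : Finset (Word N l) :=
  if i.val = 0 then Finset.univ
  else h ⟨i.val - 1, Nat.lt_of_le_of_lt (Nat.sub_le _ _) i.isLt⟩

/-- Probability that a non-chameleon at turn `i` with secret word `w` and previous
response `prev` responds `r` under `π^amb`: uniform over valid subsets if the previous
response is consistent, otherwise deterministically `null = ∅`. -/
noncomputable def nonChamProb (N l : ℕ) (w : Word N l) (i : Fin N)
    (prev r : Finset (Word N l)) : ℝ :=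
  if w ∈ prev ∧ prev.card = l * (N + 1 - i.val) then
    (if r ⊆ prev ∧ w ∈ r ∧ r.card = l * (N - i.val) then
      1 / ((prev.powerset.filter (fun s => w ∈ s ∧ s.card = l * (N - i.val))).card : ℝ)
    else 0)
  else if r = ∅ then 1 else 0

/-- A chameleon strategy: a response as a function of its index and the list of previous
responses, and a final secret-word guess as a function of its index and the full history. -/
structure ChamStrategy (N l : ℕ) where
  respond : Fin N → List (Finset (Word N l)) → Finset (Word N l)
  guess : Fin N → (Fin N → Finset (Word N l)) → Word N l

/-- Probability of a full history `h` given chameleon index `c`, secret word `w`, and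
chameleon strategy `σ`: non-chameleons follow `π^amb`, and the chameleon's coordinate must
equal the strategy's response to the previous responses. -/
noncomputable def histProb (N l : ℕ) (σ : ChamStrategy N l) (c : Fin N) (w : Word N l)
    (h : Fin N → Finset (Word N l)) : ℝ :=
  ∏ i : Fin N,
    if i = c then
      (if h i = σ.respond c (List.ofFn (fun j : Fin c.val =>
          h ⟨j.val, Nat.lt_trans j.isLt c.isLt⟩)) then 1 else 0)
    else nonChamProb N l w i (prevSet N l h i) (h i)

/-- The voted player under `π^amb`: the first player whose response has the wrong size or
does not contain the secret word; player 1 (index 0) if every response is consistent. -/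
def votedPlayer (N l : ℕ) [NeZero N] (w : Word N l)
    (h : Fin N → Finset (Word N l)) : Fin N :=
  let off := univ.filter (fun i : Fin N => w ∉ h i ∨ (h i).card ≠ l * (N - i.val))
  if hne : off.Nonempty then off.min' hne else 0

/-- Winning probability of the non-chameleons under `π^amb` against chameleon strategy
`σ`: the chameleon index and the secret word are uniform, and the non-chameleons win iff
the voted player is the chameleon and the chameleon's guess misses the secret word. -/
noncomputable def nonChamWinProb (N l : ℕ) [NeZero N] (σ : ChamStrategy N l) : ℝ :=
  (1 / ((N : ℝ) * (l * (N + 1)))) * ∑ c : Fin N, ∑ w : Word N l,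
    ∑ h : Fin N → Finset (Word N l),
      histProb N l σ c w h *
        (if votedPlayer N l w h = c ∧ σ.guess c h ≠ w then 1 else 0)

namespace Prop4

variable (N l : ℕ)

def CC (i : ℕ) : ℕ := (l * (N + 1 - i) - 1).choose (l * (N - i) - 1)

def PP (a b : ℕ) : ℕ := ∏ i ∈ Finset.Ico a b, CC N l i

def pre (a : ℕ) (S : Finset (Word N l)) (h : Fin N → Finset (Word N l)) (i : Fin N) :
    Finset (Word N l) :=
  if i.val = a then S else h ⟨i.val - 1, Nat.lt_of_le_of_lt (Nat.sub_le _ _) i.isLt⟩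

def B (a b : ℕ) (S : Finset (Word N l)) : Finset (Fin N → Finset (Word N l)) :=
  Finset.univ.filter (fun h => (∀ i : Fin N, (i.val < a ∨ b ≤ i.val) → h i = ∅) ∧
    (∀ i : Fin N, a ≤ i.val → i.val < b →
      h i ⊆ pre N l a S h i ∧ (h i).card = l * (N - i.val)))

def Bw (a b : ℕ) (w : Word N l) (S : Finset (Word N l)) :
    Finset (Fin N → Finset (Word N l)) :=
  (B N l a b S).filter (fun h => ∀ i : Fin N, a ≤ i.val → i.val < b → w ∈ h i)

variable {N l}

lemma mem_B_iff {a b : ℕ} {S : Finset (Word N l)} {h : Fin N → Finset (Word N l)} :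
    h ∈ B N l a b S ↔ (∀ i : Fin N, (i.val < a ∨ b ≤ i.val) → h i = ∅) ∧
      (∀ i : Fin N, a ≤ i.val → i.val < b →
        h i ⊆ pre N l a S h i ∧ (h i).card = l * (N - i.val)) := by
  simp [B]

lemma mem_Bw_iff {a b : ℕ} {S : Finset (Word N l)} {w : Word N l}
    {h : Fin N → Finset (Word N l)} :
    h ∈ Bw N l a b w S ↔ h ∈ B N l a b S ∧
      ∀ i : Fin N, a ≤ i.val → i.val < b → w ∈ h i := by
  simp [Bw]

lemma card_filter_powerset {α : Type*} [DecidableEq α] (t : Finset α) (w : α) (hw : w ∈ t)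
    (m : ℕ) (hm : 1 ≤ m) :
    (t.powerset.filter (fun s => w ∈ s ∧ s.card = m)).card = (t.card - 1).choose (m - 1) := by
  rw [← Finset.card_erase_of_mem hw, ← Finset.card_powersetCard]
  apply Finset.card_bij (fun s _ => s.erase w)
  · intro s hs
    simp only [Finset.mem_filter, Finset.mem_powerset] at hs
    rw [Finset.mem_powersetCard]
    exact ⟨Finset.erase_subset_erase _ hs.1, by
      rw [Finset.card_erase_of_mem hs.2.1, hs.2.2]⟩
  · intro s₁ hs₁ s₂ hs₂ heq
    simp only [Finset.mem_filter, Finset.mem_powerset] at hs₁ hs₂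
    rw [← Finset.insert_erase hs₁.2.1, ← Finset.insert_erase hs₂.2.1, heq]
  · intro u hu
    rw [Finset.mem_powersetCard] at hu
    have hwu : w ∉ u := fun h => (Finset.mem_erase.mp (hu.1 h)).1 rfl
    refine ⟨insert w u, ?_, ?_⟩
    · simp only [Finset.mem_filter, Finset.mem_powerset]
      refine ⟨Finset.insert_subset hw (hu.1.trans (Finset.erase_subset _ _)),
        Finset.mem_insert_self _ _, ?_⟩
      rw [Finset.card_insert_of_notMem hwu, hu.2]
      omega
    · rw [Finset.erase_insert hwu]

lemma chain_down {a b : ℕ} {S : Finset (Word N l)} {h : Fin N → Finset (Word N l)}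
    (hh : h ∈ B N l a b S) (hbN : b ≤ N) {w : Word N l} :
    ∀ k, a ≤ k → ∀ hkb : k < b, w ∈ h ⟨k, lt_of_lt_of_le hkb hbN⟩ →
      w ∈ S ∧ ∀ i : Fin N, a ≤ i.val → i.val ≤ k → w ∈ h i := by
  rw [mem_B_iff] at hh
  intro k hk
  induction k, hk using Nat.le_induction with
  | base =>
    intro hkb hw
    have hsub := (hh.2 ⟨a, lt_of_lt_of_le hkb hbN⟩ le_rfl hkb).1
    rw [pre, if_pos rfl] at hsub
    refine ⟨hsub hw, fun i h1 h2 => ?_⟩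
    have : i = ⟨a, lt_of_lt_of_le hkb hbN⟩ := Fin.ext (le_antisymm h2 h1)
    rwa [this]
  | succ k hak ih =>
    intro hkb hw
    have hk1 : k + 1 < N := lt_of_lt_of_le hkb hbN
    have hsub := (hh.2 ⟨k + 1, hk1⟩ (by first | omega | (simp only [Fin.val_mk]; omega)) hkb).1
    rw [pre, if_neg (by first | omega | (simp only [Fin.val_mk]; omega))] at hsub
    have hwk : w ∈ h ⟨k, by omega⟩ := by
      exact hsub hw
    obtain ⟨hS, hall⟩ := ih (by first | omega | (simp only [Fin.val_mk]; omega)) hwk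
    refine ⟨hS, fun i h1 h2 => ?_⟩
    rcases Nat.lt_or_ge i.val (k + 1) with hlt | hge
    · exact hall i h1 (by omega)
    · have : i = ⟨k + 1, hk1⟩ := Fin.ext (le_antisymm h2 hge)
      rwa [this]

lemma Bw_eq_filter_last {a b : ℕ} (hab : a < b) (hbN : b ≤ N) (w : Word N l)
    (S : Finset (Word N l)) :
    Bw N l a b w S = (B N l a b S).filter
      (fun h => w ∈ h ⟨b - 1, by omega⟩) := by
  ext h
  simp only [Bw, Finset.mem_filter, and_congr_right_iff]
  intro hB
  constructor
  · intro hall; exact hall _ (by simp only [Fin.val_mk]; omega) (by simp only [Fin.val_mk]; omega)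
  · intro hlast i h1 h2
    exact (chain_down hB hbN (b - 1) (by omega) (by omega) hlast).2 i h1 (by omega)

lemma mem_S_of_mem_Bw {a b : ℕ} (hab : a < b) (hbN : b ≤ N) {w : Word N l}
    {S : Finset (Word N l)} {h : Fin N → Finset (Word N l)} (hh : h ∈ Bw N l a b w S) :
    w ∈ S := by
  rw [Bw, Finset.mem_filter] at hh
  exact (chain_down hh.1 hbN a le_rfl hab (hh.2 _ le_rfl hab)).1

lemma Bw_self (a : ℕ) (w : Word N l) (S : Finset (Word N l)) :
    Bw N l a a w S = {fun _ => ∅} := by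
  ext h
  simp only [mem_Bw_iff, mem_B_iff, Finset.mem_singleton]
  constructor
  · rintro ⟨⟨h1, _⟩, _⟩
    funext i
    exact h1 i (by omega)
  · rintro rfl
    exact ⟨⟨fun _ _ => rfl, fun i h1 h2 => absurd h2 (by omega)⟩,
      fun i h1 h2 => absurd h2 (by omega)⟩

lemma Bw_decomp {a b : ℕ} (hab : a < b) (haN : a < N) (w : Word N l)
    (S : Finset (Word N l)) :
    Bw N l a b w S = (S.powerset.filter (fun s => w ∈ s ∧ s.card = l * (N - a))).biUnion
      (fun s => (Bw N l (a + 1) b w s).image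
        (fun p : Fin N → Finset (Word N l) => Function.update p ⟨a, haN⟩ s)) := by
  ext h
  simp only [Finset.mem_biUnion, Finset.mem_image, Finset.mem_filter, Finset.mem_powerset]
  constructor
  · intro hh
    obtain ⟨hB, hw⟩ := mem_Bw_iff.mp hh
    obtain ⟨h0, h2⟩ := mem_B_iff.mp hB
    have hac := h2 ⟨a, haN⟩ le_rfl hab
    rw [pre, if_pos rfl] at hac
    refine ⟨h ⟨a, haN⟩, ⟨hac.1, hw _ le_rfl hab, hac.2⟩,
      Function.update h ⟨a, haN⟩ ∅, ?_, ?_⟩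
    · rw [mem_Bw_iff, mem_B_iff]
      refine ⟨⟨fun i hi => ?_, fun i h1 hib => ?_⟩, fun i h1 hib => ?_⟩
      · rcases eq_or_ne i ⟨a, haN⟩ with rfl | hne
        · simp [Function.update_self]
        · rw [Function.update_of_ne hne]
          exact h0 i (by revert hi; have : i.val ≠ a := fun hc => hne (Fin.ext hc); omega)
      · have hia : i ≠ ⟨a, haN⟩ := fun hc => by
          subst hc; simp only [Fin.val_mk] at h1; omega
        rw [Function.update_of_ne hia]
        have := h2 i (by omega) hib
        rw [pre, if_neg (by omega)] at this
        refine ⟨?_, this.2⟩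
        rw [pre]
        rcases eq_or_ne i.val (a + 1) with he | hne
        · rw [if_pos he]
          have heq : (⟨i.val - 1, Nat.lt_of_le_of_lt (Nat.sub_le _ _) i.isLt⟩ : Fin N)
              = ⟨a, haN⟩ := Fin.ext (by simp [he])
          rw [heq] at this
          exact this.1
        · rw [if_neg hne]
          have hne2 : (⟨i.val - 1, Nat.lt_of_le_of_lt (Nat.sub_le _ _) i.isLt⟩ : Fin N)
              ≠ ⟨a, haN⟩ := fun hc => by
            have := Fin.mk.inj_iff.mp hc; omega
          rw [Function.update_of_ne hne2]
          exact this.1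
      · have hia : i ≠ ⟨a, haN⟩ := fun hc => by
          subst hc; simp only [Fin.val_mk] at h1; omega
        rw [Function.update_of_ne hia]
        exact hw i (by omega) hib
    · funext i
      rcases eq_or_ne i ⟨a, haN⟩ with rfl | hne
      · simp
      · simp [Function.update_of_ne hne]
  · rintro ⟨s, ⟨hsS, hws, hsc⟩, p, hp, rfl⟩
    obtain ⟨hB, hwp⟩ := mem_Bw_iff.mp hp
    obtain ⟨p0, p2⟩ := mem_B_iff.mp hB
    rw [mem_Bw_iff, mem_B_iff]
    have hpa : p ⟨a, haN⟩ = ∅ := p0 _ (Or.inl (by simp))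
    refine ⟨⟨fun i hi => ?_, fun i h1 hib => ?_⟩, fun i h1 hib => ?_⟩
    · have hia : i ≠ ⟨a, haN⟩ := fun hc => by
        subst hc; simp only [Fin.val_mk] at hi; omega
      rw [Function.update_of_ne hia]
      exact p0 i (by revert hi; have : i.val ≠ a := fun hc => hia (Fin.ext hc); omega)
    · rcases eq_or_ne i ⟨a, haN⟩ with rfl | hne
      · rw [Function.update_self, pre, if_pos rfl]
        exact ⟨hsS, by simpa using hsc⟩
      · have hva : i.val ≠ a := fun hc => hne (Fin.ext hc)
        rw [Function.update_of_ne hne]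
        have := p2 i (by omega) hib
        rw [pre] at this
        refine ⟨?_, this.2⟩
        rw [pre, if_neg hva]
        rcases eq_or_ne i.val (a + 1) with he | hne2
        · rw [if_pos he] at this
          have heq : (⟨i.val - 1, Nat.lt_of_le_of_lt (Nat.sub_le _ _) i.isLt⟩ : Fin N)
              = ⟨a, haN⟩ := Fin.ext (by simp [he])
          rw [heq, Function.update_self]
          exact this.1
        · rw [if_neg hne2] at this
          have hne3 : (⟨i.val - 1, Nat.lt_of_le_of_lt (Nat.sub_le _ _) i.isLt⟩ : Fin N)
              ≠ ⟨a, haN⟩ := fun hc => by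
            have := Fin.mk.inj_iff.mp hc; omega
          rw [Function.update_of_ne hne3]
          exact this.1
    · rcases eq_or_ne i ⟨a, haN⟩ with rfl | hne
      · rw [Function.update_self]; exact hws
      · have hva : i.val ≠ a := fun hc => hne (Fin.ext hc)
        rw [Function.update_of_ne hne]
        exact hwp i (by omega) hib

lemma card_Bw (w : Word N l) (hl : 1 ≤ l) :
    ∀ m a, a + m ≤ N → ∀ S : Finset (Word N l), w ∈ S →
      S.card = l * (N + 1 - a) → (Bw N l a (a + m) w S).card = PP N l a (a + m) := by
  intro m
  induction m with
  | zero =>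
    intro a _ S _ _
    rw [Nat.add_zero, Bw_self]
    simp [PP]
  | succ m ih =>
    intro a hmN S hwS hSc
    have haN' : a < N := by omega
    rw [Bw_decomp (by omega) haN' w S, Finset.card_biUnion ?disj]
    case disj =>
      intro s₁ _ s₂ _ hne
      simp only [Finset.disjoint_left, Finset.mem_image]
      rintro x ⟨p₁, _, rfl⟩ ⟨p₂, _, heq⟩
      exact absurd (by
        have h1 : Function.update p₂ ⟨a, haN'⟩ s₂ ⟨a, haN'⟩
            = Function.update p₁ ⟨a, haN'⟩ s₁ ⟨a, haN'⟩ := by rw [heq]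
        simpa [Function.update_self] using h1) hne.symm
    have hstep : ∀ s ∈ S.powerset.filter (fun s => w ∈ s ∧ s.card = l * (N - a)),
        ((Bw N l (a + 1) (a + (m + 1)) w s).image
          (fun p : Fin N → Finset (Word N l) => Function.update p ⟨a, haN'⟩ s)).card
          = PP N l (a + 1) (a + (m + 1)) := by
      intro s hs
      simp only [Finset.mem_filter, Finset.mem_powerset] at hs
      rw [Finset.card_image_of_injOn ?inj]
      case inj =>
        intro p₁ hp₁ p₂ hp₂ heq
        have e1 : p₁ ⟨a, haN'⟩ = ∅ :=
          (mem_B_iff.mp (mem_Bw_iff.mp (Finset.mem_coe.mp hp₁)).1).1 _ (Or.inl (by simp))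
        have e2 : p₂ ⟨a, haN'⟩ = ∅ :=
          (mem_B_iff.mp (mem_Bw_iff.mp (Finset.mem_coe.mp hp₂)).1).1 _ (Or.inl (by simp))
        funext i
        rcases eq_or_ne i ⟨a, haN'⟩ with rfl | hne
        · rw [e1, e2]
        · have := congrFun heq i
          simpa [Function.update_of_ne hne] using this
      have harr : a + (m + 1) = (a + 1) + m := by omega
      rw [harr]
      exact ih (a + 1) (by omega) s hs.2.1 (by rw [hs.2.2]; congr 1; omega)
    rw [Finset.sum_congr rfl hstep, Finset.sum_const, smul_eq_mul,
      card_filter_powerset S w hwS _ (Nat.one_le_iff_ne_zero.mpr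
        (Nat.mul_ne_zero (by omega) (by omega))), hSc]
    simp only [PP]
    rw [Finset.prod_eq_prod_Ico_succ_bot (by omega : a < a + (m + 1))]
    rfl

lemma CC_pos (hl : 1 ≤ l) {i : ℕ} (hi : i < N) : 0 < CC N l i :=
  Nat.choose_pos (Nat.sub_le_sub_right (Nat.mul_le_mul_left l (by omega)) 1)

lemma PP_pos (hl : 1 ≤ l) {a b : ℕ} (hbN : b ≤ N) : 0 < PP N l a b :=
  Finset.prod_pos fun i hi => CC_pos hl (by
    rw [Finset.mem_Ico] at hi; omega)

lemma sum_card_Bw {a b : ℕ} (hab : a < b) (hbN : b ≤ N) (S : Finset (Word N l)) :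
    ∑ w : Word N l, (Bw N l a b w S).card
      = (B N l a b S).card * (l * (N - (b - 1))) := by
  have hb1 : b - 1 < N := by omega
  have step1 : ∀ w : Word N l, (Bw N l a b w S).card
      = ((B N l a b S).filter (fun h => w ∈ h ⟨b - 1, hb1⟩)).card := by
    intro w; rw [Bw_eq_filter_last hab hbN]
  calc ∑ w : Word N l, (Bw N l a b w S).card
      = ∑ w : Word N l, ∑ h ∈ B N l a b S, (if w ∈ h ⟨b - 1, hb1⟩ then 1 else 0) := by
        refine Finset.sum_congr rfl fun w _ => ?_
        rw [step1 w, Finset.card_filter]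
    _ = ∑ h ∈ B N l a b S, ∑ w : Word N l, (if w ∈ h ⟨b - 1, hb1⟩ then 1 else 0) :=
        Finset.sum_comm
    _ = ∑ h ∈ B N l a b S, (h ⟨b - 1, hb1⟩).card := by
        refine Finset.sum_congr rfl fun h _ => ?_
        rw [← Finset.card_filter]
        congr 1
        ext x
        simp
    _ = ∑ _h ∈ B N l a b S, l * (N - (b - 1)) := by
        refine Finset.sum_congr rfl fun h hh => ?_
        exact (mem_B_iff.mp hh).2 ⟨b - 1, hb1⟩ (by simp only [Fin.val_mk]; omega)
          (by simp only [Fin.val_mk]; omega) |>.2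
    _ = (B N l a b S).card * (l * (N - (b - 1))) := by
        rw [Finset.sum_const, smul_eq_mul]

lemma prod_ite_Ico (f : ℕ → ℝ) (a b : ℕ) (hab : a ≤ b) (hbN : b ≤ N) :
    (∏ i : Fin N, if a ≤ i.val ∧ i.val < b then f i.val else 1)
      = ∏ i ∈ Finset.Ico a b, f i := by
  rw [Fin.prod_univ_eq_prod_range (fun i => if a ≤ i ∧ i < b then f i else 1) N,
    Finset.range_eq_Ico,
    ← Finset.prod_Ico_consecutive _ (Nat.zero_le a) (hab.trans hbN),
    ← Finset.prod_Ico_consecutive _ hab hbN]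
  have e1 : ∏ i ∈ Finset.Ico 0 a, (if a ≤ i ∧ i < b then f i else 1) = 1 :=
    Finset.prod_eq_one fun i hi => by
      rw [Finset.mem_Ico] at hi; rw [if_neg (by omega)]
  have e2 : ∏ i ∈ Finset.Ico b N, (if a ≤ i ∧ i < b then f i else 1) = 1 :=
    Finset.prod_eq_one fun i hi => by
      rw [Finset.mem_Ico] at hi; rw [if_neg (by omega)]
  have e3 : ∏ i ∈ Finset.Ico a b, (if a ≤ i ∧ i < b then f i else 1)
      = ∏ i ∈ Finset.Ico a b, f i :=
    Finset.prod_congr rfl fun i hi => by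
      rw [Finset.mem_Ico] at hi; rw [if_pos (by omega)]
  rw [e1, e2, e3, one_mul, mul_one]

lemma nonChamProb_nonneg (w : Word N l) (i : Fin N) (prev r : Finset (Word N l)) :
    0 ≤ nonChamProb N l w i prev r := by
  unfold nonChamProb
  split_ifs <;> positivity

lemma nonChamProb_null (w : Word N l) (i : Fin N) (prev : Finset (Word N l))
    (hcond : ¬(w ∈ prev ∧ prev.card = l * (N + 1 - i.val))) :
    nonChamProb N l w i prev ∅ = 1 := by
  unfold nonChamProb
  rw [if_neg hcond, if_pos rfl]

lemma nonChamProb_valid (w : Word N l) (i : Fin N) (prev r : Finset (Word N l))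
    (hw : w ∈ prev) (hc : prev.card = l * (N + 1 - i.val))
    (hr : r ⊆ prev) (hwr : w ∈ r) (hrc : r.card = l * (N - i.val))
    (hm : 1 ≤ l * (N - i.val)) :
    nonChamProb N l w i prev r = ((CC N l i.val : ℝ))⁻¹ := by
  unfold nonChamProb
  rw [if_pos ⟨hw, hc⟩, if_pos ⟨hr, hwr, hrc⟩,
    card_filter_powerset prev w hw _ hm, hc, one_div, CC]

lemma histProb_nonneg (σ : ChamStrategy N l) (c : Fin N) (w : Word N l)
    (h : Fin N → Finset (Word N l)) : 0 ≤ histProb N l σ c w h := by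
  unfold histProb
  refine Finset.prod_nonneg fun i _ => ?_
  split_ifs
  · norm_num
  · norm_num
  · exact nonChamProb_nonneg w i _ _

lemma votedPlayer_eq [NeZero N] {w : Word N l} {h : Fin N → Finset (Word N l)} {c : Fin N}
    (hc : w ∉ h c ∨ (h c).card ≠ l * (N - c.val))
    (hlt : ∀ i : Fin N, i < c → w ∈ h i ∧ (h i).card = l * (N - i.val)) :
    votedPlayer N l w h = c := by
  unfold votedPlayer
  have hmem : c ∈ Finset.univ.filter
      (fun i : Fin N => w ∉ h i ∨ (h i).card ≠ l * (N - i.val)) := by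
    simp only [Finset.mem_filter, Finset.mem_univ, true_and]; exact hc
  rw [dif_pos ⟨c, hmem⟩]
  refine le_antisymm (Finset.min'_le _ _ hmem) (Finset.le_min' _ _ _ fun y hy => ?_)
  by_contra hlt'
  push_neg at hlt'
  obtain ⟨hw, hcard⟩ := hlt y hlt'
  simp only [Finset.mem_filter, Finset.mem_univ, true_and] at hy
  rcases hy with h1 | h2
  · exact h1 hw
  · exact h2 hcard

lemma votedPlayer_eq_zero [NeZero N] {w : Word N l} {h : Fin N → Finset (Word N l)}
    (hall : ∀ i : Fin N, w ∈ h i ∧ (h i).card = l * (N - i.val)) :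
    votedPlayer N l w h = 0 := by
  unfold votedPlayer
  rw [dif_neg]
  rw [Finset.not_nonempty_iff_eq_empty]
  ext i
  simp only [Finset.mem_filter, Finset.mem_univ, true_and, Finset.notMem_empty, iff_false]
  push_neg
  exact hall i

end Prop4
-- appended to full.lean context
namespace Prop4
variable {N l : ℕ}

lemma pre_eq_prevSet {c : Fin N} {p H : Fin N → Finset (Word N l)}
    (hupd : ∀ j : Fin N, j ≠ c → H j = p j) (i : Fin N) (hlt : i.val < c.val) :
    prevSet N l H i = pre N l 0 Finset.univ p i := by
  unfold prevSet pre
  rcases Nat.eq_zero_or_pos i.val with h0 | h0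
  · rw [if_pos h0, if_pos h0]
  · rw [if_neg (by omega), if_neg (by omega)]
    exact hupd _ (Fin.ne_of_val_ne (by simp only [Fin.val_mk]; omega))

lemma histProb_eval_pos (σ : ChamStrategy N l) (c : Fin N) (hc : 1 ≤ c.val)
    (hl : 1 ≤ l) (w : Word N l) (p : Fin N → Finset (Word N l))
    (hp : p ∈ Bw N l 0 c.val w Finset.univ) (rp : Finset (Word N l))
    (hrp : rp = σ.respond c (List.ofFn (fun j : Fin c.val =>
      p ⟨j.val, Nat.lt_trans j.isLt c.isLt⟩)))
    (hoff : w ∉ rp ∨ rp.card ≠ l * (N - c.val)) :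
    histProb N l σ c w (Function.update p c rp) = ((PP N l 0 c.val : ℕ) : ℝ)⁻¹ := by
  obtain ⟨hB, hwchain⟩ := mem_Bw_iff.mp hp
  obtain ⟨hout, hchain⟩ := mem_B_iff.mp hB
  have hN : c.val < N := c.isLt
  have hHc : Function.update p c rp c = rp := Function.update_self c rp p
  have hupd : ∀ j : Fin N, j ≠ c → Function.update p c rp j = p j :=
    fun j hj => Function.update_of_ne hj _ _
  generalize hH : Function.update p c rp = H at hHc hupd ⊢
  unfold histProb
  have key : ∀ i : Fin N,
      (if i = c then
        (if H i = σ.respond c (List.ofFn (fun j : Fin c.val =>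
            H ⟨j.val, Nat.lt_trans j.isLt c.isLt⟩)) then (1:ℝ) else 0)
      else nonChamProb N l w i (prevSet N l H i) (H i))
      = (if 0 ≤ i.val ∧ i.val < c.val then ((CC N l i.val : ℕ) : ℝ)⁻¹ else 1) := by
    intro i
    rcases eq_or_ne i c with hic | hic
    · have hiv : i.val = c.val := by rw [hic]
      have hcond : H i = σ.respond c (List.ofFn (fun j : Fin c.val =>
          H ⟨j.val, Nat.lt_trans j.isLt c.isLt⟩)) := by
        have hlist : (fun j : Fin c.val => H ⟨j.val, Nat.lt_trans j.isLt c.isLt⟩)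
            = (fun j : Fin c.val => p ⟨j.val, Nat.lt_trans j.isLt c.isLt⟩) := by
          funext j
          exact hupd _ (Fin.ne_of_val_ne
            (by simp only [Fin.val_mk]; have := j.isLt; omega))
        rw [hic, hlist, ← hrp]
        exact hHc
      rw [if_pos hic, if_pos hcond, if_neg (by omega)]
    · rw [if_neg hic]
      rcases lt_or_ge i.val c.val with hlt | hge
      · rw [if_pos ⟨Nat.zero_le _, hlt⟩]
        have hhi : H i = p i := hupd i hic
        have hprev : prevSet N l H i = pre N l 0 Finset.univ p i :=
          pre_eq_prevSet hupd i hlt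
        have hchaini := hchain i (Nat.zero_le _) hlt
        have hwin : w ∈ p i := hwchain i (Nat.zero_le _) hlt
        have hPw : w ∈ prevSet N l H i := by
          rw [hprev]
          unfold pre
          rcases Nat.eq_zero_or_pos i.val with h0 | h0
          · rw [if_pos h0]; exact Finset.mem_univ w
          · rw [if_neg (by omega)]
            exact hwchain _ (Nat.zero_le _) (by simp only [Fin.val_mk]; omega)
        have hPc : (prevSet N l H i).card = l * (N + 1 - i.val) := by
          rw [hprev]
          unfold pre
          rcases Nat.eq_zero_or_pos i.val with h0 | h0
          · rw [if_pos h0, h0]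
            simp [Finset.card_univ]
          · rw [if_neg (by omega)]
            have hcd := (hchain ⟨i.val - 1, by omega⟩ (Nat.zero_le _)
              (by simp only [Fin.val_mk]; omega)).2
            rw [hcd]
            congr 1
            simp only [Fin.val_mk]
            omega
        have hsub : p i ⊆ prevSet N l H i := by rw [hprev]; exact hchaini.1
        have hm : 1 ≤ l * (N - i.val) :=
          Nat.one_le_iff_ne_zero.mpr (Nat.mul_ne_zero (by omega) (by omega))
        rw [hhi]
        exact nonChamProb_valid w i _ (p i) hPw hPc hsub hwin hchaini.2 hm
      · have hgt : c.val < i.val := by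
          rcases Nat.lt_or_ge c.val i.val with h' | h'
          · exact h'
          · exact absurd (Fin.ext (le_antisymm h' hge)) hic
        rw [if_neg (by omega)]
        have hpi : H i = ∅ := by rw [hupd i hic]; exact hout i (Or.inr (by omega))
        unfold prevSet
        rw [if_neg (by omega)]
        rcases eq_or_ne i.val (c.val + 1) with he | hne
        · have hidx : (⟨i.val - 1, Nat.lt_of_le_of_lt (Nat.sub_le _ _) i.isLt⟩ : Fin N)
              = c := Fin.ext (by simp only [Fin.val_mk]; omega)
          rw [hidx, hHc, hpi, nonChamProb_null]
          rintro ⟨hw1, hc1⟩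
          have hc2 : rp.card = l * (N - c.val) := by rw [hc1]; congr 1; omega
          rcases hoff with h' | h'
          · exact h' hw1
          · exact h' hc2
        · have hne2 : (⟨i.val - 1, Nat.lt_of_le_of_lt (Nat.sub_le _ _) i.isLt⟩ : Fin N)
              ≠ c := Fin.ne_of_val_ne (by simp only [Fin.val_mk]; omega)
          have hz : H ⟨i.val - 1, Nat.lt_of_le_of_lt (Nat.sub_le _ _) i.isLt⟩ = ∅ := by
            rw [hupd _ hne2]
            exact hout _ (Or.inr (by simp only [Fin.val_mk]; omega))
          rw [hz, hpi, nonChamProb_null]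
          rintro ⟨hw1, _⟩
          exact absurd hw1 (Finset.notMem_empty w)
  rw [Finset.prod_congr rfl (fun i _ => key i),
    prod_ite_Ico (fun k => ((CC N l k : ℕ) : ℝ)⁻¹) 0 c.val (Nat.zero_le _) (le_of_lt hN),
    Finset.prod_inv_distrib]
  congr 1
  rw [PP]
  push_cast
  rfl

end Prop4
namespace Prop4
variable {N l : ℕ}

variable (N l) in
def RR (σ : ChamStrategy N l) (c : Fin N) (p : Fin N → Finset (Word N l)) :
    Finset (Word N l) :=
  σ.respond c (List.ofFn (fun j : Fin c.val => p ⟨j.val, Nat.lt_trans j.isLt c.isLt⟩))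

variable (N l) in
def GG (σ : ChamStrategy N l) (c : Fin N) (p : Fin N → Finset (Word N l)) :
    Fin N → Finset (Word N l) :=
  Function.update p c (RR N l σ c p)

variable (N l) in
def DD (σ : ChamStrategy N l) (c : Fin N) (w : Word N l) :
    Finset (Fin N → Finset (Word N l)) :=
  (Bw N l 0 c.val w Finset.univ).filter (fun p =>
    (w ∉ RR N l σ c p ∨ (RR N l σ c p).card ≠ l * (N - c.val)) ∧
      σ.guess c (GG N l σ c p) ≠ w)

lemma GG_apply_ne (σ : ChamStrategy N l) (c : Fin N) (p : Fin N → Finset (Word N l))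
    (i : Fin N) (hi : i ≠ c) : GG N l σ c p i = p i := Function.update_of_ne hi _ _

lemma term_nonneg [NeZero N] (σ : ChamStrategy N l) (c : Fin N) (w : Word N l)
    (h : Fin N → Finset (Word N l)) :
    0 ≤ histProb N l σ c w h *
      (if votedPlayer N l w h = c ∧ σ.guess c h ≠ w then 1 else 0) := by
  refine mul_nonneg (histProb_nonneg σ c w h) ?_
  split_ifs <;> norm_num

set_option maxHeartbeats 1000000 in
lemma inner_bound_pos [NeZero N] (hl : 2 ≤ l) (σ : ChamStrategy N l) (c : Fin N)
    (hc : 1 ≤ c.val) :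
    ((l : ℝ) - 1) * ((l : ℝ) * ((N : ℝ) + 1)) / ((l : ℝ) * ((N : ℝ) + 1 - c.val)) ≤
      ∑ w : Word N l, ∑ h : Fin N → Finset (Word N l), histProb N l σ c w h *
        (if votedPlayer N l w h = c ∧ σ.guess c h ≠ w then 1 else 0) := by
  have hN : c.val < N := c.isLt
  have hl1 : 1 ≤ l := by omega
  have hPPpos : 0 < PP N l 0 c.val := PP_pos hl1 (le_of_lt hN)
  have step1 : ∀ w : Word N l,
      ((PP N l 0 c.val : ℕ) : ℝ)⁻¹ * ((DD N l σ c w).card : ℝ) ≤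
      ∑ h : Fin N → Finset (Word N l), histProb N l σ c w h *
        (if votedPlayer N l w h = c ∧ σ.guess c h ≠ w then 1 else 0) := by
    intro w
    have e1 : ∑ h ∈ (DD N l σ c w).image (GG N l σ c), (histProb N l σ c w h *
          (if votedPlayer N l w h = c ∧ σ.guess c h ≠ w then 1 else 0)) ≤
        ∑ h : Fin N → Finset (Word N l), histProb N l σ c w h *
          (if votedPlayer N l w h = c ∧ σ.guess c h ≠ w then 1 else 0) :=
      Finset.sum_le_univ_sum_of_nonneg (fun h => term_nonneg σ c w h)
    have hinj : ∀ p₁ ∈ DD N l σ c w, ∀ p₂ ∈ DD N l σ c w,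
        GG N l σ c p₁ = GG N l σ c p₂ → p₁ = p₂ := by
      intro p₁ hp₁ p₂ hp₂ heq
      simp only [DD, Finset.mem_filter] at hp₁ hp₂
      have q1 : p₁ c = ∅ :=
        (mem_B_iff.mp (mem_Bw_iff.mp hp₁.1).1).1 c (Or.inr le_rfl)
      have q2 : p₂ c = ∅ :=
        (mem_B_iff.mp (mem_Bw_iff.mp hp₂.1).1).1 c (Or.inr le_rfl)
      funext i
      rcases eq_or_ne i c with rfl | hne
      · rw [q1, q2]
      · have := congrFun heq i
        rwa [GG_apply_ne, GG_apply_ne] at this <;> assumption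
    have e2 : ∑ h ∈ (DD N l σ c w).image (GG N l σ c), (histProb N l σ c w h *
          (if votedPlayer N l w h = c ∧ σ.guess c h ≠ w then 1 else 0)) =
        ∑ p ∈ DD N l σ c w, (histProb N l σ c w (GG N l σ c p) *
          (if votedPlayer N l w (GG N l σ c p) = c ∧ σ.guess c (GG N l σ c p) ≠ w
            then 1 else 0)) := Finset.sum_image hinj
    have heval : ∀ p ∈ DD N l σ c w,
        histProb N l σ c w (GG N l σ c p) *
          (if votedPlayer N l w (GG N l σ c p) = c ∧ σ.guess c (GG N l σ c p) ≠ w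
            then 1 else 0) = ((PP N l 0 c.val : ℕ) : ℝ)⁻¹ := by
      intro p hp
      simp only [DD, Finset.mem_filter] at hp
      obtain ⟨hpBw, hoff, hguess⟩ := hp
      have hvote : votedPlayer N l w (GG N l σ c p) = c := by
        apply votedPlayer_eq
        · rw [GG, Function.update_self]
          exact hoff
        · intro i hi
          have hiv : i.val < c.val := hi
          have hne : i ≠ c := ne_of_lt hi
          rw [GG_apply_ne _ _ _ _ hne]
          obtain ⟨hpB, hwch⟩ := mem_Bw_iff.mp hpBw
          exact ⟨hwch i (Nat.zero_le _) hiv,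
            ((mem_B_iff.mp hpB).2 i (Nat.zero_le _) hiv).2⟩
      rw [if_pos ⟨hvote, hguess⟩, mul_one]
      exact histProb_eval_pos σ c hc hl1 w p hpBw _ rfl hoff
    have e3 : ((PP N l 0 c.val : ℕ) : ℝ)⁻¹ * ((DD N l σ c w).card : ℝ)
        = ∑ _p ∈ DD N l σ c w, ((PP N l 0 c.val : ℕ) : ℝ)⁻¹ := by
      rw [Finset.sum_const, nsmul_eq_mul, mul_comm]
    have e4 : ∑ _p ∈ DD N l σ c w, ((PP N l 0 c.val : ℕ) : ℝ)⁻¹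
        = ∑ p ∈ DD N l σ c w, (histProb N l σ c w (GG N l σ c p) *
          (if votedPlayer N l w (GG N l σ c p) = c ∧ σ.guess c (GG N l σ c p) ≠ w
            then 1 else 0)) := (Finset.sum_congr rfl heval).symm
    rw [e3, e4, ← e2]
    exact e1
  -- Step 2: counting
  have hb1 : c.val - 1 < N := by omega
  have step2 : (l - 1) * (B N l 0 c.val Finset.univ).card ≤
      ∑ w : Word N l, (DD N l σ c w).card := by
    have hDD : ∀ w : Word N l, DD N l σ c w = (B N l 0 c.val Finset.univ).filter
        (fun p => w ∈ p ⟨c.val - 1, hb1⟩ ∧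
          ((w ∉ RR N l σ c p ∨ (RR N l σ c p).card ≠ l * (N - c.val)) ∧
            σ.guess c (GG N l σ c p) ≠ w)) := by
      intro w
      rw [DD, Bw_eq_filter_last (by omega) (le_of_lt hN), Finset.filter_filter]
    calc ((l - 1) * (B N l 0 c.val Finset.univ).card : ℕ)
        = ∑ p ∈ B N l 0 c.val Finset.univ, (l - 1) := by
          rw [Finset.sum_const, smul_eq_mul, mul_comm]
      _ ≤ ∑ p ∈ B N l 0 c.val Finset.univ, (Finset.univ.filter (fun w : Word N l =>
            w ∈ p ⟨c.val - 1, hb1⟩ ∧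
            ((w ∉ RR N l σ c p ∨ (RR N l σ c p).card ≠ l * (N - c.val)) ∧
              σ.guess c (GG N l σ c p) ≠ w))).card := by
          refine Finset.sum_le_sum fun p hp => ?_
          have hA : (p ⟨c.val - 1, hb1⟩).card = l * (N - (c.val - 1)) :=
            ((mem_B_iff.mp hp).2 ⟨c.val - 1, hb1⟩ (Nat.zero_le _)
              (by simp only [Fin.val_mk]; omega)).2
          have hNc : N - (c.val - 1) = (N - c.val) + 1 := by omega
          have hAc : (p ⟨c.val - 1, hb1⟩).card = l * (N - c.val) + l := by
            rw [hA, hNc, Nat.mul_succ]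
          by_cases hsz : (RR N l σ c p).card = l * (N - c.val)
          · -- offense must come from missing w
            have hsubset : ((p ⟨c.val - 1, hb1⟩ \ RR N l σ c p).erase
                (σ.guess c (GG N l σ c p))) ⊆ Finset.univ.filter (fun w : Word N l =>
                w ∈ p ⟨c.val - 1, hb1⟩ ∧
                ((w ∉ RR N l σ c p ∨ (RR N l σ c p).card ≠ l * (N - c.val)) ∧
                  σ.guess c (GG N l σ c p) ≠ w)) := by
              intro x hx
              rw [Finset.mem_erase, Finset.mem_sdiff] at hx
              simp only [Finset.mem_filter, Finset.mem_univ, true_and]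
              exact ⟨hx.2.1, Or.inl hx.2.2, fun hgx => hx.1 hgx.symm⟩
            have h1 : l * (N - c.val) + l - (l * (N - c.val)) - 1 ≤
                ((p ⟨c.val - 1, hb1⟩ \ RR N l σ c p).erase
                  (σ.guess c (GG N l σ c p))).card := by
              calc l * (N - c.val) + l - (l * (N - c.val)) - 1
                  ≤ (p ⟨c.val - 1, hb1⟩ \ RR N l σ c p).card - 1 := by
                    have := Finset.le_card_sdiff (RR N l σ c p) (p ⟨c.val - 1, hb1⟩)
                    omega
                _ ≤ _ := Finset.pred_card_le_card_erase
            calc l - 1 ≤ l * (N - c.val) + l - (l * (N - c.val)) - 1 := by omega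
              _ ≤ _ := h1.trans (Finset.card_le_card hsubset)
          · -- wrong size: all words in the last set offend
            have hsubset : ((p ⟨c.val - 1, hb1⟩).erase (σ.guess c (GG N l σ c p)))
                ⊆ Finset.univ.filter (fun w : Word N l =>
                w ∈ p ⟨c.val - 1, hb1⟩ ∧
                ((w ∉ RR N l σ c p ∨ (RR N l σ c p).card ≠ l * (N - c.val)) ∧
                  σ.guess c (GG N l σ c p) ≠ w)) := by
              intro x hx
              rw [Finset.mem_erase] at hx
              simp only [Finset.mem_filter, Finset.mem_univ, true_and]
              exact ⟨hx.2, Or.inr hsz, fun hgx => hx.1 hgx.symm⟩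
            calc l - 1 ≤ (p ⟨c.val - 1, hb1⟩).card - 1 := by
                  have h2 : 1 ≤ N - c.val + 1 := by omega
                  have := Nat.mul_le_mul_left l h2
                  omega
              _ ≤ ((p ⟨c.val - 1, hb1⟩).erase (σ.guess c (GG N l σ c p))).card :=
                  Finset.pred_card_le_card_erase
              _ ≤ _ := Finset.card_le_card hsubset
      _ = ∑ p ∈ B N l 0 c.val Finset.univ, ∑ w : Word N l,
            (if w ∈ p ⟨c.val - 1, hb1⟩ ∧
              ((w ∉ RR N l σ c p ∨ (RR N l σ c p).card ≠ l * (N - c.val)) ∧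
                σ.guess c (GG N l σ c p) ≠ w) then 1 else 0) := by
          refine Finset.sum_congr rfl fun p _ => ?_
          rw [Finset.card_filter]
      _ = ∑ w : Word N l, (DD N l σ c w).card := by
          rw [Finset.sum_comm]
          refine Finset.sum_congr rfl fun w _ => ?_
          rw [hDD w, Finset.card_filter]
  -- Step 3: the size identity
  have step3 : (B N l 0 c.val Finset.univ).card * (l * (N - (c.val - 1)))
      = (l * (N + 1)) * PP N l 0 c.val := by
    have h1 := sum_card_Bw (a := 0) (b := c.val) (S := (Finset.univ : Finset (Word N l)))
      (by omega) (le_of_lt hN)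
    have h2 : ∀ w : Word N l, (Bw N l 0 c.val w Finset.univ).card = PP N l 0 c.val := by
      intro w
      have := card_Bw w hl1 c.val 0 (by omega) Finset.univ (Finset.mem_univ w)
        (by simp [Finset.card_univ])
      rwa [Nat.zero_add] at this
    rw [Finset.sum_congr rfl (fun w _ => h2 w), Finset.sum_const, smul_eq_mul,
      Finset.card_univ, Fintype.card_fin] at h1
    omega
  -- Combine
  have hcast : ((l * (N - (c.val - 1)) : ℕ) : ℝ) = (l : ℝ) * ((N : ℝ) + 1 - c.val) := by
    have : N - (c.val - 1) = N + 1 - c.val := by omega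
    rw [this]
    push_cast [Nat.cast_sub (by omega : c.val ≤ N + 1)]
    ring
  have hBreal : ((B N l 0 c.val Finset.univ).card : ℝ) * ((l:ℝ) * ((N:ℝ) + 1 - c.val))
      = ((l:ℝ) * ((N:ℝ) + 1)) * ((PP N l 0 c.val : ℕ) : ℝ) := by
    rw [← hcast]
    exact_mod_cast congrArg (Nat.cast (R := ℝ)) step3
  calc ((l : ℝ) - 1) * ((l : ℝ) * ((N : ℝ) + 1)) / ((l : ℝ) * ((N : ℝ) + 1 - c.val))
      ≤ ((PP N l 0 c.val : ℕ) : ℝ)⁻¹ * (((l : ℕ) - 1 : ℕ) : ℝ)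
          * ((B N l 0 c.val Finset.univ).card : ℝ) := by
        have hden : (0:ℝ) < (l:ℝ) * ((N:ℝ) + 1 - c.val) := by
          have : (c.val : ℝ) < (N : ℝ) := by exact_mod_cast hN
          have hl0 : (0:ℝ) < l := by exact_mod_cast hl1
          nlinarith
        have hPP : (0:ℝ) < ((PP N l 0 c.val : ℕ) : ℝ) := by exact_mod_cast hPPpos
        rw [div_le_iff₀ hden]
        have hll : (((l : ℕ) - 1 : ℕ) : ℝ) = (l : ℝ) - 1 := by
          push_cast [Nat.cast_sub hl1]; ring
        rw [hll]
        rw [show ((PP N l 0 c.val : ℕ) : ℝ)⁻¹ * ((l:ℝ) - 1)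
            * ((B N l 0 c.val Finset.univ).card : ℝ) * ((l:ℝ) * ((N:ℝ) + 1 - c.val))
          = ((PP N l 0 c.val : ℕ) : ℝ)⁻¹ * ((l:ℝ) - 1)
            * (((B N l 0 c.val Finset.univ).card : ℝ) * ((l:ℝ) * ((N:ℝ) + 1 - c.val)))
          from by ring, hBreal]
        rw [show ((PP N l 0 c.val : ℕ) : ℝ)⁻¹ * ((l:ℝ) - 1)
            * ((l:ℝ) * ((N:ℝ) + 1) * ((PP N l 0 c.val : ℕ) : ℝ))
          = ((l:ℝ) - 1) * ((l:ℝ) * ((N:ℝ) + 1))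
            * (((PP N l 0 c.val : ℕ) : ℝ)⁻¹ * ((PP N l 0 c.val : ℕ) : ℝ)) from by ring]
        rw [inv_mul_cancel₀ (ne_of_gt hPP), mul_one]
    _ ≤ ((PP N l 0 c.val : ℕ) : ℝ)⁻¹ * (∑ w : Word N l, ((DD N l σ c w).card : ℝ)) := by
        rw [mul_assoc]
        refine mul_le_mul_of_nonneg_left ?_ (by positivity)
        have : ((((l - 1) * (B N l 0 c.val Finset.univ).card : ℕ)) : ℝ)
            ≤ ((∑ w : Word N l, (DD N l σ c w).card : ℕ) : ℝ) := by
          exact_mod_cast step2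
        push_cast at this ⊢
        convert this using 2
    _ = ∑ w : Word N l, ((PP N l 0 c.val : ℕ) : ℝ)⁻¹ * ((DD N l σ c w).card : ℝ) := by
        rw [Finset.mul_sum]
    _ ≤ _ := Finset.sum_le_sum fun w _ => step1 w

end Prop4
namespace Prop4
variable {N l : ℕ}

lemma respond_list_zero [NeZero N] (σ : ChamStrategy N l) (h : Fin N → Finset (Word N l)) :
    σ.respond (0 : Fin N) (List.ofFn (fun j : Fin ((0 : Fin N)).val =>
      h ⟨j.val, Nat.lt_trans j.isLt (0 : Fin N).isLt⟩)) = σ.respond 0 [] := by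
  have hnil : List.ofFn (fun j : Fin ((0 : Fin N)).val =>
      h ⟨j.val, Nat.lt_trans j.isLt (0 : Fin N).isLt⟩) = [] :=
    List.ofFn_eq_nil_iff.mpr (Fin.val_zero N)
  rw [hnil]

variable (N l) in
def Hzero [NeZero N] (σ : ChamStrategy N l) : Fin N → Finset (Word N l) :=
  Function.update (fun _ => ∅) (0 : Fin N) (σ.respond 0 [])

lemma histProb_eval_A [NeZero N] (σ : ChamStrategy N l) (w : Word N l)
    (hoff : w ∉ σ.respond 0 [] ∨ (σ.respond 0 []).card ≠ l * N) :
    histProb N l σ (0 : Fin N) w (Hzero N l σ) = 1 := by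
  unfold histProb
  refine Finset.prod_eq_one fun i _ => ?_
  rcases eq_or_ne i (0 : Fin N) with rfl | hne
  · rw [if_pos rfl, if_pos]
    rw [respond_list_zero, Hzero, Function.update_self]
  · rw [if_neg hne]
    have hiv : 1 ≤ i.val := by
      have : i.val ≠ 0 := fun hc => hne (Fin.ext (by rw [hc, Fin.val_zero]))
      omega
    have hHi : Hzero N l σ i = ∅ := Function.update_of_ne hne _ _
    rw [hHi]
    unfold prevSet
    rw [if_neg (by omega)]
    rcases eq_or_ne i.val 1 with he | hne2
    · have hidx : (⟨i.val - 1, Nat.lt_of_le_of_lt (Nat.sub_le _ _) i.isLt⟩ : Fin N)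
          = (0 : Fin N) := Fin.ext (by simp only [Fin.val_mk, Fin.val_zero]; omega)
      rw [hidx]
      rw [show Hzero N l σ (0 : Fin N) = σ.respond 0 [] from Function.update_self _ _ _]
      rw [nonChamProb_null]
      rintro ⟨hw1, hc1⟩
      have : (σ.respond 0 []).card = l * N := by rw [hc1]; congr 1; omega
      rcases hoff with h' | h'
      · exact h' hw1
      · exact h' this
    · have hne3 : (⟨i.val - 1, Nat.lt_of_le_of_lt (Nat.sub_le _ _) i.isLt⟩ : Fin N)
          ≠ (0 : Fin N) := fun hc => by
        have := congrArg Fin.val hc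
        simp only [Fin.val_mk, Fin.val_zero] at this
        omega
      rw [show Hzero N l σ ⟨i.val - 1, Nat.lt_of_le_of_lt (Nat.sub_le _ _) i.isLt⟩ = ∅
        from Function.update_of_ne hne3 _ _]
      rw [nonChamProb_null]
      rintro ⟨hw1, _⟩
      exact absurd hw1 (Finset.notMem_empty w)

lemma voted_A [NeZero N] (σ : ChamStrategy N l) (w : Word N l)
    (hoff : w ∉ σ.respond 0 [] ∨ (σ.respond 0 []).card ≠ l * N) :
    votedPlayer N l w (Hzero N l σ) = 0 := by
  apply votedPlayer_eq
  · rw [show Hzero N l σ (0 : Fin N) = σ.respond 0 [] from Function.update_self _ _ _]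
    rw [Fin.val_zero, Nat.sub_zero]
    exact hoff
  · intro i hi
    exact absurd (by rwa [Fin.lt_def, Fin.val_zero] at hi) (Nat.not_lt_zero i.val)

lemma histProb_eval_B [NeZero N] (σ : ChamStrategy N l) (hN : 2 ≤ N) (hl : 1 ≤ l)
    (w : Word N l) (hw : w ∈ σ.respond 0 [])
    (hr : (σ.respond 0 []).card = l * N)
    (p : Fin N → Finset (Word N l)) (hp : p ∈ Bw N l 1 N w (σ.respond 0 [])) :
    histProb N l σ (0 : Fin N) w (Function.update p (0 : Fin N) (σ.respond 0 []))
      = ((PP N l 1 N : ℕ) : ℝ)⁻¹ := by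
  obtain ⟨hB, hwchain⟩ := mem_Bw_iff.mp hp
  obtain ⟨hout, hchain⟩ := mem_B_iff.mp hB
  have hHc : Function.update p (0 : Fin N) (σ.respond 0 []) (0 : Fin N) = σ.respond 0 [] :=
    Function.update_self _ _ _
  have hupd : ∀ j : Fin N, j ≠ (0 : Fin N) →
      Function.update p (0 : Fin N) (σ.respond 0 []) j = p j :=
    fun j hj => Function.update_of_ne hj _ _
  generalize hH : Function.update p (0 : Fin N) (σ.respond 0 []) = H at hHc hupd ⊢
  unfold histProb
  have key : ∀ i : Fin N,
      (if i = (0 : Fin N) then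
        (if H i = σ.respond (0 : Fin N) (List.ofFn (fun j : Fin ((0 : Fin N)).val =>
            H ⟨j.val, Nat.lt_trans j.isLt (0 : Fin N).isLt⟩)) then (1:ℝ) else 0)
      else nonChamProb N l w i (prevSet N l H i) (H i))
      = (if 1 ≤ i.val ∧ i.val < N then ((CC N l i.val : ℕ) : ℝ)⁻¹ else 1) := by
    intro i
    rcases eq_or_ne i (0 : Fin N) with rfl | hic
    · rw [if_pos rfl, respond_list_zero, if_pos hHc,
        if_neg (by rw [Fin.val_zero]; omega)]
    · have hiv : 1 ≤ i.val := by
        have : i.val ≠ 0 := fun hc => hic (Fin.ext (by rw [hc, Fin.val_zero]))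
        omega
      rw [if_neg hic, if_pos ⟨hiv, i.isLt⟩]
      have hhi : H i = p i := hupd i hic
      have hchaini := hchain i hiv i.isLt
      have hwin : w ∈ p i := hwchain i hiv i.isLt
      have hprev : prevSet N l H i = pre N l 1 (σ.respond 0 []) p i := by
        unfold prevSet pre
        rw [if_neg (by omega)]
        rcases eq_or_ne i.val 1 with he | hne2
        · rw [if_pos he]
          have hidx : (⟨i.val - 1, Nat.lt_of_le_of_lt (Nat.sub_le _ _) i.isLt⟩ : Fin N)
              = (0 : Fin N) := Fin.ext (by simp only [Fin.val_mk, Fin.val_zero]; omega)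
          rw [hidx]
          exact hHc
        · rw [if_neg hne2]
          refine hupd _ fun hc => ?_
          have := congrArg Fin.val hc
          simp only [Fin.val_mk, Fin.val_zero] at this
          omega
      have hPw : w ∈ prevSet N l H i := by
        rw [hprev]
        unfold pre
        rcases eq_or_ne i.val 1 with he | hne2
        · rw [if_pos he]; exact hw
        · rw [if_neg hne2]
          exact hwchain _ (by simp only [Fin.val_mk]; omega)
            (by simp only [Fin.val_mk]; omega)
      have hPc : (prevSet N l H i).card = l * (N + 1 - i.val) := by
        rw [hprev]
        unfold pre
        rcases eq_or_ne i.val 1 with he | hne2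
        · rw [if_pos he, hr, he]
          norm_num
        · rw [if_neg hne2]
          have hcd := (hchain ⟨i.val - 1, by omega⟩
            (by simp only [Fin.val_mk]; omega) (by simp only [Fin.val_mk]; omega)).2
          rw [hcd]
          congr 1
          simp only [Fin.val_mk]
          omega
      have hsub : p i ⊆ prevSet N l H i := by rw [hprev]; exact hchaini.1
      have hm : 1 ≤ l * (N - i.val) :=
        Nat.one_le_iff_ne_zero.mpr (Nat.mul_ne_zero (by omega)
          (by have := i.isLt; omega))
      rw [hhi]
      exact nonChamProb_valid w i _ (p i) hPw hPc hsub hwin hchaini.2 hm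
  rw [Finset.prod_congr rfl (fun i _ => key i),
    prod_ite_Ico (fun k => ((CC N l k : ℕ) : ℝ)⁻¹) 1 N (by omega) le_rfl,
    Finset.prod_inv_distrib]
  congr 1
  rw [PP]
  push_cast
  rfl

lemma voted_B [NeZero N] (σ : ChamStrategy N l) (w : Word N l)
    (hw : w ∈ σ.respond 0 []) (hr : (σ.respond 0 []).card = l * N)
    (p : Fin N → Finset (Word N l)) (hp : p ∈ Bw N l 1 N w (σ.respond 0 [])) :
    votedPlayer N l w (Function.update p (0 : Fin N) (σ.respond 0 [])) = 0 := by
  obtain ⟨hB, hwchain⟩ := mem_Bw_iff.mp hp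
  obtain ⟨hout, hchain⟩ := mem_B_iff.mp hB
  apply votedPlayer_eq_zero
  intro i
  rcases eq_or_ne i (0 : Fin N) with rfl | hic
  · rw [Function.update_self, Fin.val_zero, Nat.sub_zero]
    exact ⟨hw, hr⟩
  · have hiv : 1 ≤ i.val := by
      have : i.val ≠ 0 := fun hc => hic (Fin.ext (by rw [hc, Fin.val_zero]))
      omega
    rw [Function.update_of_ne hic]
    exact ⟨hwchain i hiv i.isLt, (hchain i hiv i.isLt).2⟩

end Prop4
namespace Prop4
variable {N l : ℕ}

variable (N l) in
def D0 [NeZero N] (σ : ChamStrategy N l) (w : Word N l) :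
    Finset (Fin N → Finset (Word N l)) :=
  (Bw N l 1 N w (σ.respond 0 [])).filter (fun p =>
    σ.guess 0 (Function.update p (0 : Fin N) (σ.respond 0 [])) ≠ w)

set_option maxHeartbeats 1000000 in
lemma inner_bound_zero [NeZero N] (hl : 2 ≤ l) (hN : 2 ≤ N) (σ : ChamStrategy N l) :
    ((l : ℝ) - 1) * ((N : ℝ) + 1) ≤
      ∑ w : Word N l, ∑ h : Fin N → Finset (Word N l), histProb N l σ (0 : Fin N) w h *
        (if votedPlayer N l w h = (0 : Fin N) ∧ σ.guess 0 h ≠ w then 1 else 0) := by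
  have hl1 : 1 ≤ l := by omega
  have hK : Fintype.card (Word N l) = l * (N + 1) := Fintype.card_fin _
  have hFnonneg : ∀ w : Word N l, (0:ℝ) ≤
      ∑ h : Fin N → Finset (Word N l), histProb N l σ (0 : Fin N) w h *
        (if votedPlayer N l w h = (0 : Fin N) ∧ σ.guess 0 h ≠ w then 1 else 0) :=
    fun w => Finset.sum_nonneg fun h _ => term_nonneg σ 0 w h
  -- Part A : single-history bound
  have hA : ∀ w : Word N l, (w ∉ σ.respond 0 [] ∨ (σ.respond 0 []).card ≠ l * N) →
      σ.guess 0 (Hzero N l σ) ≠ w →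
      (1:ℝ) ≤ ∑ h : Fin N → Finset (Word N l), histProb N l σ (0 : Fin N) w h *
        (if votedPlayer N l w h = (0 : Fin N) ∧ σ.guess 0 h ≠ w then 1 else 0) := by
    intro w hoff hg
    have h1 : histProb N l σ (0 : Fin N) w (Hzero N l σ) *
        (if votedPlayer N l w (Hzero N l σ) = (0 : Fin N) ∧
          σ.guess 0 (Hzero N l σ) ≠ w then 1 else 0) = 1 := by
      rw [histProb_eval_A σ w hoff, one_mul, if_pos ⟨voted_A σ w hoff, hg⟩]
    calc (1:ℝ) = histProb N l σ (0 : Fin N) w (Hzero N l σ) *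
        (if votedPlayer N l w (Hzero N l σ) = (0 : Fin N) ∧
          σ.guess 0 (Hzero N l σ) ≠ w then 1 else 0) := h1.symm
      _ ≤ _ := Finset.single_le_sum
        (f := fun h => histProb N l σ (0 : Fin N) w h *
          (if votedPlayer N l w h = (0 : Fin N) ∧ σ.guess 0 h ≠ w then 1 else 0))
        (fun h _ => term_nonneg σ 0 w h) (Finset.mem_univ (Hzero N l σ))
  by_cases hsz : (σ.respond 0 []).card = l * N
  · -- consistent first response
    have hNlt : 1 < N := by omega
    have hPPpos : 0 < PP N l 1 N := PP_pos hl1 le_rfl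
    -- Part B : per-w bound for w ∈ r₀
    have stepB : ∀ w ∈ σ.respond 0 [],
        ((PP N l 1 N : ℕ) : ℝ)⁻¹ * ((D0 N l σ w).card : ℝ) ≤
        ∑ h : Fin N → Finset (Word N l), histProb N l σ (0 : Fin N) w h *
          (if votedPlayer N l w h = (0 : Fin N) ∧ σ.guess 0 h ≠ w then 1 else 0) := by
      intro w hw
      have e1 : ∑ h ∈ (D0 N l σ w).image
            (fun p : Fin N → Finset (Word N l) =>
              Function.update p (0 : Fin N) (σ.respond 0 [])),
            (histProb N l σ (0 : Fin N) w h *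
            (if votedPlayer N l w h = (0 : Fin N) ∧ σ.guess 0 h ≠ w then 1 else 0)) ≤
          ∑ h : Fin N → Finset (Word N l), histProb N l σ (0 : Fin N) w h *
            (if votedPlayer N l w h = (0 : Fin N) ∧ σ.guess 0 h ≠ w then 1 else 0) :=
        Finset.sum_le_univ_sum_of_nonneg (fun h => term_nonneg σ 0 w h)
      have hinj : ∀ p₁ ∈ D0 N l σ w, ∀ p₂ ∈ D0 N l σ w,
          Function.update p₁ (0 : Fin N) (σ.respond 0 [])
            = Function.update p₂ (0 : Fin N) (σ.respond 0 []) → p₁ = p₂ := by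
        intro p₁ hp₁ p₂ hp₂ heq
        simp only [D0, Finset.mem_filter] at hp₁ hp₂
        have q1 : p₁ (0 : Fin N) = ∅ :=
          (mem_B_iff.mp (mem_Bw_iff.mp hp₁.1).1).1 (0 : Fin N)
            (Or.inl (by rw [Fin.val_zero]; omega))
        have q2 : p₂ (0 : Fin N) = ∅ :=
          (mem_B_iff.mp (mem_Bw_iff.mp hp₂.1).1).1 (0 : Fin N)
            (Or.inl (by rw [Fin.val_zero]; omega))
        funext i
        rcases eq_or_ne i (0 : Fin N) with rfl | hne
        · rw [q1, q2]
        · have := congrFun heq i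
          rwa [Function.update_of_ne hne, Function.update_of_ne hne] at this
      have e2 : ∑ h ∈ (D0 N l σ w).image
            (fun p : Fin N → Finset (Word N l) =>
              Function.update p (0 : Fin N) (σ.respond 0 [])),
            (histProb N l σ (0 : Fin N) w h *
            (if votedPlayer N l w h = (0 : Fin N) ∧ σ.guess 0 h ≠ w then 1 else 0)) =
          ∑ p ∈ D0 N l σ w,
            (histProb N l σ (0 : Fin N) w
              (Function.update p (0 : Fin N) (σ.respond 0 [])) *
            (if votedPlayer N l w (Function.update p (0 : Fin N) (σ.respond 0 []))
                = (0 : Fin N) ∧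
              σ.guess 0 (Function.update p (0 : Fin N) (σ.respond 0 [])) ≠ w
              then 1 else 0)) := Finset.sum_image hinj
      have heval : ∀ p ∈ D0 N l σ w,
          histProb N l σ (0 : Fin N) w
              (Function.update p (0 : Fin N) (σ.respond 0 [])) *
            (if votedPlayer N l w (Function.update p (0 : Fin N) (σ.respond 0 []))
                = (0 : Fin N) ∧
              σ.guess 0 (Function.update p (0 : Fin N) (σ.respond 0 [])) ≠ w
              then 1 else 0) = ((PP N l 1 N : ℕ) : ℝ)⁻¹ := by
        intro p hp
        simp only [D0, Finset.mem_filter] at hp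
        obtain ⟨hpBw, hguess⟩ := hp
        rw [if_pos ⟨voted_B σ w hw hsz p hpBw, hguess⟩, mul_one]
        exact histProb_eval_B σ hN hl1 w hw hsz p hpBw
      have e3 : ((PP N l 1 N : ℕ) : ℝ)⁻¹ * ((D0 N l σ w).card : ℝ)
          = ∑ _p ∈ D0 N l σ w, ((PP N l 1 N : ℕ) : ℝ)⁻¹ := by
        rw [Finset.sum_const, nsmul_eq_mul, mul_comm]
      have e4 : (∑ _p ∈ D0 N l σ w, ((PP N l 1 N : ℕ) : ℝ)⁻¹)
          = ∑ p ∈ D0 N l σ w,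
            (histProb N l σ (0 : Fin N) w
              (Function.update p (0 : Fin N) (σ.respond 0 [])) *
            (if votedPlayer N l w (Function.update p (0 : Fin N) (σ.respond 0 []))
                = (0 : Fin N) ∧
              σ.guess 0 (Function.update p (0 : Fin N) (σ.respond 0 [])) ≠ w
              then 1 else 0)) := (Finset.sum_congr rfl heval).symm
      rw [e3, e4, ← e2]
      exact e1
    -- counting for Part B
    have hb1 : N - 1 < N := by omega
    have hD0eq : ∀ w : Word N l, D0 N l σ w
        = (B N l 1 N (σ.respond 0 [])).filter (fun p =>
          w ∈ p ⟨N - 1, hb1⟩ ∧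
          σ.guess 0 (Function.update p (0 : Fin N) (σ.respond 0 [])) ≠ w) := by
      intro w
      rw [D0, Bw_eq_filter_last hNlt le_rfl, Finset.filter_filter]
    have hcount : (l - 1) * (B N l 1 N (σ.respond 0 [])).card ≤
        ∑ w ∈ σ.respond 0 [], (D0 N l σ w).card := by
      calc (l - 1) * (B N l 1 N (σ.respond 0 [])).card
          = ∑ p ∈ B N l 1 N (σ.respond 0 []), (l - 1) := by
            rw [Finset.sum_const, smul_eq_mul, mul_comm]
        _ ≤ ∑ p ∈ B N l 1 N (σ.respond 0 []), ((σ.respond 0 []).filter (fun w =>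
              w ∈ p ⟨N - 1, hb1⟩ ∧
              σ.guess 0 (Function.update p (0 : Fin N) (σ.respond 0 [])) ≠ w)).card := by
            refine Finset.sum_le_sum fun p hp => ?_
            have hlast : (p ⟨N - 1, hb1⟩).card = l :=  by
              have := ((mem_B_iff.mp hp).2 ⟨N - 1, hb1⟩
                (by simp only [Fin.val_mk]; omega) (by simp only [Fin.val_mk]; omega)).2
              rw [this]
              have : N - (N - 1) = 1 := by omega
              rw [Fin.val_mk, this, Nat.mul_one]
            have hsubset : (p ⟨N - 1, hb1⟩).erase
                (σ.guess 0 (Function.update p (0 : Fin N) (σ.respond 0 [])))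
                ⊆ (σ.respond 0 []).filter (fun w =>
                  w ∈ p ⟨N - 1, hb1⟩ ∧
                  σ.guess 0 (Function.update p (0 : Fin N) (σ.respond 0 [])) ≠ w) := by
              intro x hx
              rw [Finset.mem_erase] at hx
              rw [Finset.mem_filter]
              have hxS : x ∈ σ.respond 0 [] :=
                (chain_down hp le_rfl (N - 1) (by omega) (by omega) hx.2).1
              exact ⟨hxS, hx.2, fun hgx => hx.1 hgx.symm⟩
            calc l - 1 ≤ (p ⟨N - 1, hb1⟩).card - 1 := by omega
              _ ≤ ((p ⟨N - 1, hb1⟩).erase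
                  (σ.guess 0 (Function.update p (0 : Fin N) (σ.respond 0 [])))).card :=
                Finset.pred_card_le_card_erase
              _ ≤ _ := Finset.card_le_card hsubset
        _ = ∑ p ∈ B N l 1 N (σ.respond 0 []), ∑ w ∈ σ.respond 0 [],
              (if w ∈ p ⟨N - 1, hb1⟩ ∧
                σ.guess 0 (Function.update p (0 : Fin N) (σ.respond 0 [])) ≠ w
                then 1 else 0) := by
            refine Finset.sum_congr rfl fun p _ => ?_
            rw [Finset.card_filter]
        _ = ∑ w ∈ σ.respond 0 [], (D0 N l σ w).card := by
            rw [Finset.sum_comm]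
            refine Finset.sum_congr rfl fun w _ => ?_
            rw [hD0eq w, Finset.card_filter]
    -- size identity
    have hBcard : (B N l 1 N (σ.respond 0 [])).card = N * PP N l 1 N := by
      have h1 := sum_card_Bw (a := 1) (b := N) (S := σ.respond 0 []) hNlt le_rfl
      have h2 : ∀ w : Word N l, (Bw N l 1 N w (σ.respond 0 [])).card
          = if w ∈ σ.respond 0 [] then PP N l 1 N else 0 := by
        intro w
        by_cases hw : w ∈ σ.respond 0 []
        · rw [if_pos hw]
          have := card_Bw w hl1 (N - 1) 1 (by omega) (σ.respond 0 []) hw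
            (by simpa using hsz)
          rwa [show 1 + (N - 1) = N by omega] at this
        · rw [if_neg hw, Finset.card_eq_zero]
          rw [Finset.eq_empty_iff_forall_notMem]
          intro p hp
          exact hw (mem_S_of_mem_Bw hNlt le_rfl hp)
      rw [Finset.sum_congr rfl (fun w _ => h2 w), Finset.sum_ite_mem,
        Finset.univ_inter, Finset.sum_const, smul_eq_mul, hsz] at h1
      have hNN : N - (N - 1) = 1 := by omega
      rw [hNN, Nat.mul_one] at h1
      have h2 : l * (B N l 1 N (σ.respond 0 [])).card = l * (N * PP N l 1 N) := by
        rw [Nat.mul_comm l ((B N l 1 N (σ.respond 0 [])).card), ← h1]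
        ring
      exact Nat.eq_of_mul_eq_mul_left (show 0 < l by omega) h2
    -- combine part B
    have hPP : (0:ℝ) < ((PP N l 1 N : ℕ) : ℝ) := by exact_mod_cast hPPpos
    have hcount2 := hcount
    rw [hBcard] at hcount2
    have hPB : ((l:ℝ) - 1) * (N : ℝ) ≤ ∑ w ∈ σ.respond 0 [],
        ∑ h : Fin N → Finset (Word N l), histProb N l σ (0 : Fin N) w h *
          (if votedPlayer N l w h = (0 : Fin N) ∧ σ.guess 0 h ≠ w then 1 else 0) := by
      have s1 : ∑ w ∈ σ.respond 0 [],
          (((PP N l 1 N : ℕ) : ℝ)⁻¹ * ((D0 N l σ w).card : ℝ)) ≤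
          ∑ w ∈ σ.respond 0 [],
          ∑ h : Fin N → Finset (Word N l), histProb N l σ (0 : Fin N) w h *
            (if votedPlayer N l w h = (0 : Fin N) ∧ σ.guess 0 h ≠ w then 1 else 0) :=
        Finset.sum_le_sum stepB
      have hc2 : (((l - 1) * (N * PP N l 1 N) : ℕ) : ℝ)
          ≤ ∑ w ∈ σ.respond 0 [], ((D0 N l σ w).card : ℝ) := by
        rw [← Nat.cast_sum]
        exact Nat.cast_le.mpr hcount2
      have hc3 : ((l:ℝ) - 1) * ((N:ℝ) * ((PP N l 1 N : ℕ) : ℝ))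
          ≤ ∑ w ∈ σ.respond 0 [], ((D0 N l σ w).card : ℝ) := by
        refine le_trans (le_of_eq ?_) hc2
        push_cast [Nat.cast_sub hl1]
        ring
      have s2 : ((l:ℝ) - 1) * (N : ℝ) ≤ ∑ w ∈ σ.respond 0 [],
          (((PP N l 1 N : ℕ) : ℝ)⁻¹ * ((D0 N l σ w).card : ℝ)) := by
        rw [← Finset.mul_sum]
        calc ((l:ℝ) - 1) * (N : ℝ)
            = ((PP N l 1 N : ℕ) : ℝ)⁻¹ *
              (((l:ℝ) - 1) * ((N:ℝ) * ((PP N l 1 N : ℕ) : ℝ))) := by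
              field_simp
          _ ≤ _ := mul_le_mul_of_nonneg_left hc3 (by positivity)
      exact le_trans s2 s1
    -- part A on the complement
    have hWA : ((l:ℝ) - 1) ≤ ∑ w ∈ Finset.univ \ σ.respond 0 [],
        ∑ h : Fin N → Finset (Word N l), histProb N l σ (0 : Fin N) w h *
          (if votedPlayer N l w h = (0 : Fin N) ∧ σ.guess 0 h ≠ w then 1 else 0) := by
      have hsub2 : (Finset.univ \ σ.respond 0 []).erase (σ.guess 0 (Hzero N l σ))
          ⊆ Finset.univ \ σ.respond 0 [] := Finset.erase_subset _ _
      have hcard2 : l - 1 ≤ ((Finset.univ \ σ.respond 0 []).erase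
          (σ.guess 0 (Hzero N l σ))).card := by
        have h1 : (Finset.univ \ σ.respond 0 []).card = l * (N + 1) - l * N := by
          rw [Finset.card_sdiff_of_subset (Finset.subset_univ _), Finset.card_univ, hK, hsz]
        have h3 := Finset.pred_card_le_card_erase
          (s := Finset.univ \ σ.respond 0 []) (a := σ.guess 0 (Hzero N l σ))
        have h2 : l * (N + 1) = l * N + l := by ring
        omega
      calc ((l:ℝ) - 1) ≤ (((Finset.univ \ σ.respond 0 []).erase
            (σ.guess 0 (Hzero N l σ))).card : ℝ) := by
            have h4 : ((l - 1 : ℕ) : ℝ) ≤ (((Finset.univ \ σ.respond 0 []).erase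
                (σ.guess 0 (Hzero N l σ))).card : ℝ) := Nat.cast_le.mpr hcard2
            rw [Nat.cast_sub hl1] at h4
            simpa using h4
        _ = ∑ _w ∈ (Finset.univ \ σ.respond 0 []).erase
              (σ.guess 0 (Hzero N l σ)), (1:ℝ) := by
            rw [Finset.sum_const, nsmul_eq_mul, mul_one]
        _ ≤ ∑ w ∈ (Finset.univ \ σ.respond 0 []).erase (σ.guess 0 (Hzero N l σ)),
              ∑ h : Fin N → Finset (Word N l), histProb N l σ (0 : Fin N) w h *
              (if votedPlayer N l w h = (0 : Fin N) ∧ σ.guess 0 h ≠ w then 1 else 0) := by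
            refine Finset.sum_le_sum fun w hw => ?_
            rw [Finset.mem_erase, Finset.mem_sdiff] at hw
            exact hA w (Or.inl hw.2.2) hw.1.symm
        _ ≤ _ := Finset.sum_le_sum_of_subset_of_nonneg hsub2
            (fun w _ _ => hFnonneg w)
    have hsplit : (∑ w : Word N l,
        ∑ h : Fin N → Finset (Word N l), histProb N l σ (0 : Fin N) w h *
          (if votedPlayer N l w h = (0 : Fin N) ∧ σ.guess 0 h ≠ w then 1 else 0))
        = (∑ w ∈ Finset.univ \ σ.respond 0 [],
            ∑ h : Fin N → Finset (Word N l), histProb N l σ (0 : Fin N) w h *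
            (if votedPlayer N l w h = (0 : Fin N) ∧ σ.guess 0 h ≠ w then 1 else 0))
          + ∑ w ∈ σ.respond 0 [],
            ∑ h : Fin N → Finset (Word N l), histProb N l σ (0 : Fin N) w h *
            (if votedPlayer N l w h = (0 : Fin N) ∧ σ.guess 0 h ≠ w then 1 else 0) :=
      (Finset.sum_sdiff (Finset.subset_univ _)).symm
    rw [hsplit]
    have hexp : ((l:ℝ) - 1) * ((N:ℝ) + 1)
        = ((l:ℝ) - 1) * (N:ℝ) + ((l:ℝ) - 1) := by ring
    linarith
  · -- wrong size first response
    have hsub1 : Finset.univ.erase (σ.guess 0 (Hzero N l σ)) ⊆ Finset.univ :=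
      Finset.erase_subset _ _
    have hcard1 : ((Finset.univ.erase (σ.guess 0 (Hzero N l σ))).card : ℝ)
        = (l : ℝ) * ((N : ℝ) + 1) - 1 := by
      rw [Finset.card_erase_of_mem (Finset.mem_univ _), Finset.card_univ, hK]
      push_cast [Nat.cast_sub (show 1 ≤ l * (N + 1) from
        Nat.one_le_iff_ne_zero.mpr (Nat.mul_ne_zero (by omega) (by omega)))]
      ring
    calc ((l : ℝ) - 1) * ((N : ℝ) + 1)
        ≤ (l : ℝ) * ((N : ℝ) + 1) - 1 := by nlinarith [Nat.cast_nonneg (α := ℝ) N]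
      _ = ∑ _w ∈ Finset.univ.erase (σ.guess 0 (Hzero N l σ)), (1:ℝ) := by
          rw [Finset.sum_const, nsmul_eq_mul, mul_one, hcard1]
      _ ≤ ∑ w ∈ Finset.univ.erase (σ.guess 0 (Hzero N l σ)),
            ∑ h : Fin N → Finset (Word N l), histProb N l σ (0 : Fin N) w h *
            (if votedPlayer N l w h = (0 : Fin N) ∧ σ.guess 0 h ≠ w then 1 else 0) := by
          refine Finset.sum_le_sum fun w hw => ?_
          exact hA w (Or.inr hsz) (Finset.ne_of_mem_erase hw).symm
      _ ≤ _ := Finset.sum_le_sum_of_subset_of_nonneg hsub1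
          (fun w _ _ => hFnonneg w)

end Prop4
namespace Prop4

lemma harmonic_ge : ∀ n : ℕ, 3 ≤ n →
    Real.log ((n : ℝ) + 1) + 0.4 ≤ ∑ k ∈ Finset.range n, ((k : ℝ) + 1)⁻¹ := by
  intro n hn
  induction n, hn using Nat.le_induction with
  | base =>
    have h4 : Real.log 4 = 2 * Real.log 2 := by
      rw [show (4:ℝ) = 2 ^ 2 by norm_num, Real.log_pow]
      push_cast; ring
    have hl2 := Real.log_two_lt_d9
    have he : ((3:ℕ):ℝ) + 1 = 4 := by norm_num
    rw [he, h4]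
    rw [Finset.sum_range_succ, Finset.sum_range_succ, Finset.sum_range_succ,
      Finset.sum_range_zero]
    norm_num
    linarith
  | succ n hn ih =>
    rw [Finset.sum_range_succ]
    have hpos : (0:ℝ) < (n:ℝ) + 1 := by positivity
    have hpos2 : (0:ℝ) < (n:ℝ) + 1 + 1 := by positivity
    have hstep : Real.log ((n:ℝ) + 1 + 1) - Real.log ((n:ℝ) + 1) ≤ ((n:ℝ) + 1)⁻¹ := by
      rw [← Real.log_div (ne_of_gt hpos2) (ne_of_gt hpos)]
      have h1 := Real.log_le_sub_one_of_pos
        (show (0:ℝ) < ((n:ℝ) + 1 + 1) / ((n:ℝ) + 1) by positivity)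
      have heq : ((n:ℝ) + 1 + 1) / ((n:ℝ) + 1) - 1 = ((n:ℝ) + 1)⁻¹ := by
        field_simp
        ring
      linarith
    push_cast
    push_cast at ih
    linarith

lemma sum_t_eq (N : ℕ) :
    ∑ k ∈ Finset.range N, (if k = 0 then (1:ℝ) else ((N:ℝ) + 1 - (k:ℝ))⁻¹)
      = ∑ k ∈ Finset.range N, ((k:ℝ) + 1)⁻¹ := by
  refine Finset.sum_nbij' (fun k => if k = 0 then 0 else N - k)
    (fun k => if k = 0 then 0 else N - k) ?_ ?_ ?_ ?_ ?_
  · intro a ha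
    rw [Finset.mem_range] at ha
    show (if a = 0 then 0 else N - a) ∈ Finset.range N
    rw [Finset.mem_range]
    split_ifs <;> omega
  · intro a ha
    rw [Finset.mem_range] at ha
    show (if a = 0 then 0 else N - a) ∈ Finset.range N
    rw [Finset.mem_range]
    split_ifs <;> omega
  · intro a ha
    rw [Finset.mem_range] at ha
    split_ifs with h1 h2 h3
    · omega
    · omega
    · omega
    · omega
  · intro a ha
    rw [Finset.mem_range] at ha
    split_ifs with h1 h2 h3
    · omega
    · omega
    · omega
    · omega
  · intro a ha
    rw [Finset.mem_range] at ha
    by_cases h0 : a = 0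
    · rw [if_pos h0, if_pos h0]
      norm_num
    · rw [if_neg h0, if_neg h0]
      congr 1
      have hc : ((N - a : ℕ) : ℝ) = (N:ℝ) - (a:ℝ) :=
        Nat.cast_sub (by omega)
      rw [hc]
      ring

end Prop4


open Prop4

/-- Proposition 4: for every chameleon strategy, the non-chameleons playing `π^amb` win
with probability at least `((log(N+1) + 0.4)/N)·((l-1)/l)`. -/
theorem amb_strategy_win_prob_lower_bound (N l : ℕ) [NeZero N]
    (hN : 3 ≤ N) (hl : 2 ≤ l) (σ : ChamStrategy N l) :
    ((Real.log ((N : ℝ) + 1) + 0.4) / N) * (((l : ℝ) - 1) / l) ≤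
      nonChamWinProb N l σ := by

  have hNpos : (0:ℝ) < N := by exact_mod_cast (by omega : 0 < N)
  have hlpos : (0:ℝ) < l := by exact_mod_cast (by omega : 0 < l)
  have hcoef : (0:ℝ) < 1 / ((N:ℝ) * ((l:ℝ) * ((N:ℝ) + 1))) := by positivity
  have hper : ∀ c : Fin N, ((l:ℝ) - 1) * ((N:ℝ) + 1) *
      (if c.val = 0 then (1:ℝ) else ((N:ℝ) + 1 - (c.val:ℝ))⁻¹) ≤
      ∑ w : Word N l, ∑ h : Fin N → Finset (Word N l), histProb N l σ c w h *
        (if votedPlayer N l w h = c ∧ σ.guess c h ≠ w then 1 else 0) := by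
    intro c
    rcases Nat.eq_zero_or_pos c.val with h0 | h0
    · rw [if_pos h0, mul_one]
      have hc0 : c = 0 := Fin.ext (by rw [h0, Fin.val_zero])
      rw [hc0]
      exact inner_bound_zero hl (by omega) σ
    · rw [if_neg (by omega)]
      refine le_trans (le_of_eq ?_) (inner_bound_pos hl σ c h0)
      have hcN : (c.val:ℝ) < (N:ℝ) := by exact_mod_cast c.isLt
      have hpos : (0:ℝ) < (N:ℝ) + 1 - (c.val:ℝ) := by linarith
      field_simp
  have hsum : ∑ c : Fin N, (((l:ℝ) - 1) * ((N:ℝ) + 1) *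
      (if c.val = 0 then (1:ℝ) else ((N:ℝ) + 1 - (c.val:ℝ))⁻¹)) ≤
      ∑ c : Fin N, ∑ w : Word N l, ∑ h : Fin N → Finset (Word N l),
        histProb N l σ c w h *
        (if votedPlayer N l w h = c ∧ σ.guess c h ≠ w then 1 else 0) :=
    Finset.sum_le_sum (fun c _ => hper c)
  have hbndsum : ∑ c : Fin N, (((l:ℝ) - 1) * ((N:ℝ) + 1) *
      (if c.val = 0 then (1:ℝ) else ((N:ℝ) + 1 - (c.val:ℝ))⁻¹))
      = ((l:ℝ) - 1) * ((N:ℝ) + 1) * ∑ k ∈ Finset.range N, ((k:ℝ) + 1)⁻¹ := by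
    rw [← Finset.mul_sum]
    congr 1
    rw [Fin.sum_univ_eq_sum_range
      (fun k => if k = 0 then (1:ℝ) else ((N:ℝ) + 1 - (k:ℝ))⁻¹) N]
    exact sum_t_eq N
  have hH := harmonic_ge N hN
  have hlge : (0:ℝ) ≤ ((l:ℝ) - 1) * ((N:ℝ) + 1) := by
    have : (1:ℝ) ≤ (l:ℝ) := by exact_mod_cast (by omega : 1 ≤ l)
    nlinarith
  unfold nonChamWinProb
  calc ((Real.log ((N : ℝ) + 1) + 0.4) / N) * (((l : ℝ) - 1) / l)
      = (1 / ((N:ℝ) * ((l:ℝ) * ((N:ℝ) + 1)))) *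
        (((l:ℝ) - 1) * ((N:ℝ) + 1) * (Real.log ((N:ℝ) + 1) + 0.4)) := by
        field_simp
    _ ≤ (1 / ((N:ℝ) * ((l:ℝ) * ((N:ℝ) + 1)))) *
        (((l:ℝ) - 1) * ((N:ℝ) + 1) * ∑ k ∈ Finset.range N, ((k:ℝ) + 1)⁻¹) := by
        refine mul_le_mul_of_nonneg_left ?_ (le_of_lt hcoef)
        exact mul_le_mul_of_nonneg_left hH hlge
    _ = (1 / ((N:ℝ) * ((l:ℝ) * ((N:ℝ) + 1)))) *
        ∑ c : Fin N, (((l:ℝ) - 1) * ((N:ℝ) + 1) *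
          (if c.val = 0 then (1:ℝ) else ((N:ℝ) + 1 - (c.val:ℝ))⁻¹)) := by
        rw [hbndsum]
    _ ≤ _ := mul_le_mul_of_nonneg_left hsum (le_of_lt hcoef)
end
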